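/- arXiv:1312.0134 — 4 statements merged into one kernel-verified Lean document; each statement's English description precedes it below -/
import Mathlib

section
/- The identity 2 (-q;q)_∞ Σ_{n≥1} q^{2n}/(1−q^{2n}) = 2 Σ_{λ ∈ O} n(λ) q^{|λ|} − 2 Σ_{μ ∈ D} n(μ) q^{|μ|} holds as formal power series in q, where O is the set of partitions into odd parts, D the set of partitions into distinct parts, and n(λ) denotes the number of parts of λ. -/
open PowerSeries Finset

/-- The product (coefficient-wise convergence) topology on formal power series. -/
noncomputable instance : TopologicalSpace (PowerSeries ℚ) :=
  inferInstanceAs (TopologicalSpace ((Unit →₀ ℕ) → ℚ))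

/-- The finite q-Pochhammer symbol `(a; q)_n = ∏_{k=0}^{n-1} (1 - a q^k)`. -/
noncomputable def poch (a q : PowerSeries ℚ) (n : ℕ) : PowerSeries ℚ :=
  ∏ k ∈ range n, (1 - a * q ^ k)

/-- The infinite q-Pochhammer symbol `(a; q)_∞ = ∏_{k≥0} (1 - a q^k)`. -/
noncomputable def pochInf (a q : PowerSeries ℚ) : PowerSeries ℚ :=
  ∏' k : ℕ, (1 - a * q ^ k)

open Filter Multiset

/-- geometric-type series: sum of X^(c*j) -/
noncomputable def Gk (c : ℕ) : PowerSeries ℚ := PowerSeries.mk fun n => if c ∣ n then 1 else 0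

@[simp] lemma coeff_Gk (c n : ℕ) : (coeff n) (Gk c) = if c ∣ n then 1 else 0 :=
  PowerSeries.coeff_mk _ _

lemma Gk_mul (c : ℕ) (hc : 0 < c) : (1 - X ^ c) * Gk c = 1 := by
  ext n
  rw [sub_mul, one_mul, map_sub]
  rcases Nat.lt_or_ge n c with h | h
  · rw [PowerSeries.coeff_X_pow_mul' (Gk c) c n, if_neg (by omega)]
    rcases Nat.eq_zero_or_pos n with rfl | hn
    · simp [Gk, PowerSeries.constantCoeff_mk]
    · have : ¬ c ∣ n := fun hd => absurd (Nat.le_of_dvd hn hd) (by omega)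
      rw [PowerSeries.coeff_one, if_neg (by omega : ¬ n = 0), sub_zero, coeff_Gk, if_neg this]
  · rw [PowerSeries.coeff_X_pow_mul' (Gk c) c n, if_pos h]
    have hdvd : (c ∣ n) ↔ (c ∣ n - c) := by
      constructor
      · intro hd; exact (Nat.dvd_sub hd dvd_rfl)
      · intro hd; have := Nat.dvd_add hd (dvd_refl c); rwa [Nat.sub_add_cancel h] at this
    have hn0 : n ≠ 0 := by omega
    by_cases hd : c ∣ n
    · simp [hd, hdvd.mp hd, hn0]
    · simp [hd, fun h' => hd (hdvd.mpr h'), hn0]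
      exact lt_of_le_of_ne h (by rintro rfl; exact hd dvd_rfl)

lemma Gk_eq_inv (c : ℕ) (hc : 0 < c) : (1 - X ^ c : PowerSeries ℚ)⁻¹ = Gk c := by
  rw [PowerSeries.inv_eq_iff_mul_eq_one]
  · rw [mul_comm]; exact Gk_mul c hc
  · simp [hc.ne']

/-- products of factors ≡ 1 mod X^t are ≡ 1 mod X^t -/
lemma junk_prod {s : Finset ℕ} {f : ℕ → PowerSeries ℚ} {t : ℕ}
    (h : ∀ c ∈ s, (X : PowerSeries ℚ) ^ t ∣ (f c - 1)) :
    (X : PowerSeries ℚ) ^ t ∣ (∏ c ∈ s, f c) - 1 := by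
  classical
  induction s using Finset.induction with
  | empty => simp
  | @insert a s' hx ih =>
    rw [Finset.prod_insert hx]
    have h1 : (X : PowerSeries ℚ) ^ t ∣ (f a - 1) := h a (mem_insert_self _ _)
    have h2 := ih (fun c hc => h c (mem_insert_of_mem hc))
    have : f a * ∏ c ∈ s', f c - 1
        = (f a - 1) * (∏ c ∈ s', f c) + ((∏ c ∈ s', f c) - 1) := by ring
    rw [this]
    exact dvd_add (h1.mul_right _) h2

lemma coeff_mul_junk {A B : PowerSeries ℚ} {t n : ℕ} (hB : (X : PowerSeries ℚ) ^ t ∣ (B - 1))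
    (hn : n < t) : (coeff n) (A * B) = (coeff n) A := by
  have : A * B = A + A * (B - 1) := by ring
  rw [this, _root_.map_add]
  have hz : (coeff n) (A * (B - 1)) = 0 := by
    have : (X : PowerSeries ℚ) ^ t ∣ A * (B - 1) := hB.mul_left A
    rcases this with ⟨R, hR⟩
    rw [hR, PowerSeries.coeff_X_pow_mul' R t n, if_neg (by omega)]
  rw [hz, add_zero]


lemma apply_eq_coeff (F : PowerSeries ℚ) (x : Unit →₀ ℕ) :
    (F : (Unit →₀ ℕ) → ℚ) x = (coeff (x ())) F := by
  have hx : x = Finsupp.single () (x ()) := by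
    ext; simp
  conv_lhs => rw [hx]
  rfl

lemma tendsto_coeff {ι : Type*} {L : Filter ι} (g : ι → PowerSeries ℚ) (F : PowerSeries ℚ)
    (h : ∀ d : ℕ, ∀ᶠ i in L, (coeff d) (g i) = (coeff d) F) :
    Tendsto g L (nhds F) := by
  have : Tendsto (fun i => (g i : (Unit →₀ ℕ) → ℚ)) L (nhds (F : (Unit →₀ ℕ) → ℚ)) := by
    apply tendsto_pi_nhds.mpr
    intro x
    rw [apply_eq_coeff F x]
    apply Tendsto.congr' _ (tendsto_const_nhds (x := (coeff (x ())) F))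
    filter_upwards [h (x ())] with i hi
    rw [apply_eq_coeff (g i) x, hi]
  exact this

lemma t2_power_series : T2Space (PowerSeries ℚ) :=
  inferInstanceAs (T2Space ((Unit →₀ ℕ) → ℚ))

lemma msum_le_of_le {s t : Multiset ℕ} (h : s ≤ t) : s.sum ≤ t.sum := by
  have := tsub_add_cancel_of_le h
  have h2 := congrArg Multiset.sum this
  rw [Multiset.sum_add] at h2
  omega

/-- Master removal bijection. -/
lemma card_remove (n k j : ℕ) (hk : 0 < k) (Q Q₂ : Multiset ℕ → Prop) [DecidablePred Q]
    [DecidablePred Q₂]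
    (hQ : ∀ m : Multiset ℕ, Q (Multiset.replicate j k + m) ↔ Q₂ m) (r : ℕ)
    (hr : n = k * j + r) :
    ((univ : Finset (Nat.Partition n)).filter
        (fun p => Q p.parts ∧ j ≤ p.parts.count k)).card
    = ((univ : Finset (Nat.Partition r)).filter (fun p => Q₂ p.parts)).card := by
  classical
  have hrep : (Multiset.replicate j k).sum = k * j := by
    simp [Multiset.sum_replicate, mul_comm]
  apply Finset.card_bij'
    (i := fun p hp =>
      (⟨p.parts - Multiset.replicate j k,
        fun {i} hi => p.parts_pos (Multiset.mem_of_le tsub_le_self hi),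
        by
          rw [Finset.mem_filter] at hp
          have hle : Multiset.replicate j k ≤ p.parts :=
            Multiset.le_count_iff_replicate_le.mp hp.2.2
          have h2 := congrArg Multiset.sum (tsub_add_cancel_of_le hle)
          rw [Multiset.sum_add, hrep, p.parts_sum] at h2
          omega⟩ : Nat.Partition r))
    (j := fun p hp =>
      (⟨Multiset.replicate j k + p.parts,
        fun {i} hi => by
          rcases Multiset.mem_add.mp hi with h | h
          · rw [Multiset.eq_of_mem_replicate h]; exact hk
          · exact p.parts_pos h,
        by rw [Multiset.sum_add, hrep, p.parts_sum]; omega⟩ : Nat.Partition n))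
  · intro p hp
    apply Nat.Partition.ext
    rw [Finset.mem_filter] at hp
    have hle : Multiset.replicate j k ≤ p.parts :=
      Multiset.le_count_iff_replicate_le.mp hp.2.2
    simp only
    rw [add_comm, tsub_add_cancel_of_le hle]
  · intro p hp
    apply Nat.Partition.ext
    simp only
    rw [add_comm, add_tsub_cancel_right]
  · -- maps into
    intro p hp
    rw [Finset.mem_filter] at hp ⊢
    refine ⟨Finset.mem_univ _, ?_⟩
    have hle : Multiset.replicate j k ≤ p.parts :=
      Multiset.le_count_iff_replicate_le.mp hp.2.2
    have hre : Multiset.replicate j k + (p.parts - Multiset.replicate j k) = p.parts := by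
      rw [add_comm, tsub_add_cancel_of_le hle]
    rw [← hQ, hre]
    exact hp.2.1
  · intro p hp
    rw [Finset.mem_filter] at hp ⊢
    refine ⟨Finset.mem_univ _, ?_, ?_⟩
    · rw [hQ]; exact hp.2
    · simp [Multiset.count_replicate]

lemma card_remove_zero (n k j : ℕ) (hj : 0 < j) (Q : Multiset ℕ → Prop) [DecidablePred Q]
    (hkn : n < k * j) :
    ((univ : Finset (Nat.Partition n)).filter
        (fun p => Q p.parts ∧ j ≤ p.parts.count k)).card = 0 := by
  rw [Finset.card_eq_zero, Finset.filter_eq_empty_iff]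
  rintro p - ⟨-, hcount⟩
  have hle : Multiset.replicate j k ≤ p.parts :=
    Multiset.le_count_iff_replicate_le.mp hcount
  have := msum_le_of_le hle
  rw [Multiset.sum_replicate, p.parts_sum] at this
  simp only [smul_eq_mul] at this
  have hc : j * k = k * j := Nat.mul_comm j k
  omega

lemma card_split (n k : ℕ) (Q : Multiset ℕ → Prop) [DecidablePred Q] :
    ((univ : Finset (Nat.Partition n)).filter (fun p => Q p.parts)).card
    = ((univ : Finset (Nat.Partition n)).filter
        (fun p => Q p.parts ∧ p.parts.count k = 0)).card
      + ((univ : Finset (Nat.Partition n)).filter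
        (fun p => Q p.parts ∧ 1 ≤ p.parts.count k)).card := by
  classical
  rw [← Finset.filter_filter, ← Finset.filter_filter]
  rw [← Finset.card_filter_add_card_filter_not
    (p := fun p : Nat.Partition n => p.parts.count k = 0)]
  congr 2
  apply Finset.filter_congr
  intro p _
  omega

instance : T2Space (PowerSeries ℚ) := t2_power_series

/-- partial product for distinct partitions -/
noncomputable def DP (M : ℕ) : PowerSeries ℚ := ∏ c ∈ Finset.Ioc 0 M, (1 + X ^ c)

/-- partial product for odd partitions -/
noncomputable def OPer (M : ℕ) : PowerSeries ℚ :=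
  ∏ c ∈ Finset.Ioc 0 M, (if Even c then 1 else Gk c)

/-- distinct partitions with parts bounded by M -/
noncomputable def DF (n M : ℕ) : Finset (Nat.Partition n) :=
  Finset.univ.filter (fun p => p.parts.Nodup ∧ ∀ i ∈ p.parts, i ≤ M)

/-- odd partitions with parts bounded by M -/
noncomputable def OF (n M : ℕ) : Finset (Nat.Partition n) :=
  Finset.univ.filter (fun p => (∀ i ∈ p.parts, ¬ Even i) ∧ ∀ i ∈ p.parts, i ≤ M)

lemma parts_le_sum {n : ℕ} (p : Nat.Partition n) {i : ℕ} (hi : i ∈ p.parts) : i ≤ n := by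
  rw [← p.parts_sum]
  exact Multiset.le_sum_of_mem hi

lemma bound_zero {n : ℕ} (p : Nat.Partition n) (h : ∀ i ∈ p.parts, i ≤ 0) (hn : 0 < n) : False := by
  have hz : p.parts = 0 := Multiset.eq_zero_of_forall_notMem (fun i hi => by
    have := p.parts_pos hi; have := h i hi; omega)
  have hs := p.parts_sum
  rw [hz, Multiset.sum_zero] at hs
  omega

lemma card_partition_zero_filter (Q : Nat.Partition 0 → Prop) [DecidablePred Q]
    (hQ : ∀ p, Q p) :
    ((Finset.univ : Finset (Nat.Partition 0)).filter Q).card = 1 := by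
  rw [Finset.filter_true_of_mem (fun p _ => hQ p), Finset.card_univ]
  simp

lemma card_DF_zero (n : ℕ) : ((DF n 0).card : ℚ) = if n = 0 then 1 else 0 := by
  rcases Nat.eq_zero_or_pos n with rfl | hn
  · rw [if_pos rfl, DF, card_partition_zero_filter]
    · norm_num
    · intro p
      rw [p.partition_zero_parts]
      constructor
      · exact Multiset.nodup_zero
      · intro i hi; simp at hi
  · rw [if_neg (by omega)]
    rw [DF, Finset.card_eq_zero.mpr, Nat.cast_zero]
    rw [Finset.filter_eq_empty_iff]
    rintro p - ⟨-, hb⟩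
    exact bound_zero p hb hn

lemma card_OF_zero (n : ℕ) : ((OF n 0).card : ℚ) = if n = 0 then 1 else 0 := by
  rcases Nat.eq_zero_or_pos n with rfl | hn
  · rw [if_pos rfl, OF, card_partition_zero_filter]
    · norm_num
    · intro p
      rw [p.partition_zero_parts]
      constructor <;> (intro i hi; simp at hi)
  · rw [if_neg (by omega)]
    rw [OF, Finset.card_eq_zero.mpr, Nat.cast_zero]
    rw [Finset.filter_eq_empty_iff]
    rintro p - ⟨-, hb⟩
    exact bound_zero p hb hn

lemma card_DF_succ (n M : ℕ) :
    ((DF n (M + 1)).card : ℚ)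
      = (DF n M).card + if M + 1 ≤ n then ((DF (n - (M + 1)) M).card : ℚ) else 0 := by
  classical
  have hsplit := card_split n (M + 1) (fun m => m.Nodup ∧ ∀ i ∈ m, i ≤ M + 1)
  have h0 : ((Finset.univ : Finset (Nat.Partition n)).filter
      (fun p => (p.parts.Nodup ∧ ∀ i ∈ p.parts, i ≤ M + 1) ∧ p.parts.count (M + 1) = 0))
      = DF n M := by
    apply Finset.filter_congr
    intro p _
    constructor
    · rintro ⟨⟨hnd, hb⟩, hc⟩
      refine ⟨hnd, fun i hi => ?_⟩
      have h1 := hb i hi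
      have h2 : i ≠ M + 1 := fun h => by
        rw [h] at hi
        rw [Multiset.count_eq_zero] at hc
        exact hc hi
      omega
    · rintro ⟨hnd, hb⟩
      refine ⟨⟨hnd, fun i hi => le_trans (hb i hi) (by omega)⟩, ?_⟩
      rw [Multiset.count_eq_zero]
      intro hmem
      have := hb _ hmem
      omega
  have h1 : (((Finset.univ : Finset (Nat.Partition n)).filter
      (fun p => (p.parts.Nodup ∧ ∀ i ∈ p.parts, i ≤ M + 1) ∧ 1 ≤ p.parts.count (M + 1))).card : ℚ)
      = if M + 1 ≤ n then ((DF (n - (M + 1)) M).card : ℚ) else 0 := by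
    by_cases h : M + 1 ≤ n
    · rw [if_pos h]
      have := card_remove n (M + 1) 1 (by omega)
        (fun m => m.Nodup ∧ ∀ i ∈ m, i ≤ M + 1)
        (fun m => m.Nodup ∧ ∀ i ∈ m, i ≤ M)
        (fun m => by
          simp only [Multiset.replicate_one, Multiset.singleton_add, Multiset.nodup_cons]
          constructor
          · rintro ⟨⟨hnm, hnd⟩, hb⟩
            refine ⟨hnd, fun i hi => ?_⟩
            have := hb i (Multiset.mem_cons_of_mem hi)
            have : i ≠ M + 1 := fun he => hnm (he ▸ hi)
            omega
          · rintro ⟨hnd, hb⟩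
            refine ⟨⟨fun hmem => by have := hb _ hmem; omega, hnd⟩, ?_⟩
            intro i hi
            rcases Multiset.mem_cons.mp hi with rfl | hi'
            · omega
            · exact le_trans (hb i hi') (by omega))
        (n - (M + 1)) (by omega)
      rw [this, DF]
    · rw [if_neg h]
      have hz := card_remove_zero n (M + 1) 1 (by omega)
        (fun m => m.Nodup ∧ ∀ i ∈ m, i ≤ M + 1) (by omega)
      rw [hz, Nat.cast_zero]
  have hcast : ((DF n (M + 1)).card : ℚ)
      = (((Finset.univ : Finset (Nat.Partition n)).filter
          (fun p => (p.parts.Nodup ∧ ∀ i ∈ p.parts, i ≤ M + 1)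
            ∧ p.parts.count (M + 1) = 0)).card : ℚ)
        + (((Finset.univ : Finset (Nat.Partition n)).filter
          (fun p => (p.parts.Nodup ∧ ∀ i ∈ p.parts, i ≤ M + 1)
            ∧ 1 ≤ p.parts.count (M + 1))).card : ℚ) := by
    rw [DF, hsplit]
    push_cast
    ring
  rw [hcast, h0, h1]

lemma coeff_DP_succ (n M : ℕ) :
    (coeff n) (DP (M + 1))
      = (coeff n) (DP M) + if M + 1 ≤ n then (coeff (n - (M + 1))) (DP M) else 0 := by
  rw [DP, Finset.prod_Ioc_succ_top (Nat.zero_le _)]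
  rw [← DP, mul_add, mul_one, _root_.map_add, PowerSeries.coeff_mul_X_pow']

lemma coeff_DP (M n : ℕ) : (coeff n) (DP M) = ((DF n M).card : ℚ) := by
  induction M generalizing n with
  | zero =>
    rw [card_DF_zero]
    have : DP 0 = 1 := by rw [DP]; simp
    rw [this]
    simp [PowerSeries.coeff_one]
  | succ M ih =>
    rw [coeff_DP_succ, card_DF_succ, ih]
    by_cases h : M + 1 ≤ n
    · rw [if_pos h, if_pos h, ih]
    · rw [if_neg h, if_neg h]

lemma Gk_decomp (c : ℕ) (hc : 0 < c) : Gk c = 1 + X ^ c * Gk c := by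
  ext n
  rw [_root_.map_add, PowerSeries.coeff_X_pow_mul' (Gk c) c n, coeff_Gk, PowerSeries.coeff_one]
  rcases Nat.lt_or_ge n c with h | h
  · rcases Nat.eq_zero_or_pos n with rfl | hn
    · simp [if_neg (by omega : ¬ c ≤ 0), (by omega : ¬ c = 0)]
      omega
    · have hnd : ¬ c ∣ n := fun hd => absurd (Nat.le_of_dvd hn hd) (by omega)
      rw [if_neg hnd, if_neg (by omega : ¬ n = 0), if_neg (by omega : ¬ c ≤ n)]
      norm_num
  · have hdvd : (c ∣ n) ↔ (c ∣ n - c) := by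
      constructor
      · intro hd; exact Nat.dvd_sub hd dvd_rfl
      · intro hd; have := Nat.dvd_add hd (dvd_refl c); rwa [Nat.sub_add_cancel h] at this
    rw [if_neg (by omega : ¬ n = 0), if_pos h, coeff_Gk]
    by_cases hd : c ∣ n
    · rw [if_pos hd, if_pos (hdvd.mp hd)]; norm_num
    · rw [if_neg hd, if_neg (fun h' => hd (hdvd.mpr h'))]; norm_num

lemma OF_succ_even (n M : ℕ) (h : Even (M + 1)) : OF n (M + 1) = OF n M := by
  apply Finset.filter_congr
  intro p _
  constructor
  · rintro ⟨hodd, hb⟩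
    refine ⟨hodd, fun i hi => ?_⟩
    have h1 := hb i hi
    have h2 : i ≠ M + 1 := fun he => hodd i hi (he ▸ h)
    omega
  · rintro ⟨hodd, hb⟩
    exact ⟨hodd, fun i hi => le_trans (hb i hi) (by omega)⟩

lemma card_OF_succ_odd (n M : ℕ) (h : ¬ Even (M + 1)) :
    ((OF n (M + 1)).card : ℚ)
      = (OF n M).card + if M + 1 ≤ n then ((OF (n - (M + 1)) (M + 1)).card : ℚ) else 0 := by
  classical
  have hsplit := card_split n (M + 1)
    (fun m => (∀ i ∈ m, ¬ Even i) ∧ ∀ i ∈ m, i ≤ M + 1)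
  have h0 : ((Finset.univ : Finset (Nat.Partition n)).filter
      (fun p => ((∀ i ∈ p.parts, ¬ Even i) ∧ ∀ i ∈ p.parts, i ≤ M + 1)
        ∧ p.parts.count (M + 1) = 0)) = OF n M := by
    apply Finset.filter_congr
    intro p _
    constructor
    · rintro ⟨⟨hodd, hb⟩, hc⟩
      refine ⟨hodd, fun i hi => ?_⟩
      have h1 := hb i hi
      have h2 : i ≠ M + 1 := fun he => by
        rw [he] at hi
        rw [Multiset.count_eq_zero] at hc
        exact hc hi
      omega
    · rintro ⟨hodd, hb⟩
      refine ⟨⟨hodd, fun i hi => le_trans (hb i hi) (by omega)⟩, ?_⟩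
      rw [Multiset.count_eq_zero]
      intro hmem
      have := hb _ hmem
      omega
  have h1 : (((Finset.univ : Finset (Nat.Partition n)).filter
      (fun p => ((∀ i ∈ p.parts, ¬ Even i) ∧ ∀ i ∈ p.parts, i ≤ M + 1)
        ∧ 1 ≤ p.parts.count (M + 1))).card : ℚ)
      = if M + 1 ≤ n then ((OF (n - (M + 1)) (M + 1)).card : ℚ) else 0 := by
    by_cases hle : M + 1 ≤ n
    · rw [if_pos hle]
      have := card_remove n (M + 1) 1 (by omega)
        (fun m => (∀ i ∈ m, ¬ Even i) ∧ ∀ i ∈ m, i ≤ M + 1)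
        (fun m => (∀ i ∈ m, ¬ Even i) ∧ ∀ i ∈ m, i ≤ M + 1)
        (fun m => by
          simp only [Multiset.replicate_one, Multiset.singleton_add, Multiset.mem_cons]
          constructor
          · rintro ⟨hodd, hb⟩
            exact ⟨fun i hi => hodd i (Or.inr hi), fun i hi => hb i (Or.inr hi)⟩
          · rintro ⟨hodd, hb⟩
            refine ⟨fun i hi => ?_, fun i hi => ?_⟩
            · rcases hi with rfl | hi'
              · exact h
              · exact hodd i hi'
            · rcases hi with rfl | hi'
              · omega
              · exact hb i hi')
        (n - (M + 1)) (by omega)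
      rw [this, OF]
    · rw [if_neg hle]
      have hz := card_remove_zero n (M + 1) 1 (by omega)
        (fun m => (∀ i ∈ m, ¬ Even i) ∧ ∀ i ∈ m, i ≤ M + 1) (by omega)
      rw [hz, Nat.cast_zero]
  have hcast : ((OF n (M + 1)).card : ℚ)
      = (((Finset.univ : Finset (Nat.Partition n)).filter
          (fun p => ((∀ i ∈ p.parts, ¬ Even i) ∧ ∀ i ∈ p.parts, i ≤ M + 1)
            ∧ p.parts.count (M + 1) = 0)).card : ℚ)
        + (((Finset.univ : Finset (Nat.Partition n)).filter
          (fun p => ((∀ i ∈ p.parts, ¬ Even i) ∧ ∀ i ∈ p.parts, i ≤ M + 1)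
            ∧ 1 ≤ p.parts.count (M + 1))).card : ℚ) := by
    rw [OF, hsplit]
    push_cast
    ring
  rw [hcast, h0, h1]

lemma coeff_OPer (M : ℕ) : ∀ n, (coeff n) (OPer M) = ((OF n M).card : ℚ) := by
  induction M with
  | zero =>
    intro n
    rw [card_OF_zero]
    have : OPer 0 = 1 := by rw [OPer]; simp
    rw [this]
    simp [PowerSeries.coeff_one]
  | succ M ih =>
    have hunf : OPer (M + 1) = OPer M * (if Even (M + 1) then 1 else Gk (M + 1)) := by
      rw [OPer, Finset.prod_Ioc_succ_top (Nat.zero_le _), ← OPer]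
    by_cases hev : Even (M + 1)
    · intro n
      rw [hunf, if_pos hev, mul_one, OF_succ_even n M hev, ih]
    · intro n
      induction n using Nat.strong_induction_on with
      | _ n ihn =>
        rw [hunf, if_neg hev]
        conv_lhs => rw [Gk_decomp (M + 1) (by omega)]
        have hassoc : OPer M * (1 + X ^ (M + 1) * Gk (M + 1))
            = OPer M + (OPer M * Gk (M + 1)) * X ^ (M + 1) := by ring
        rw [hassoc, _root_.map_add, PowerSeries.coeff_mul_X_pow', ih n,
          card_OF_succ_odd n M hev]
        congr 1
        by_cases hle : M + 1 ≤ n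
        · rw [if_pos hle, if_pos hle]
          have := ihn (n - (M + 1)) (by omega)
          rw [hunf, if_neg hev] at this
          rw [this]
        · rw [if_neg hle, if_neg hle]

lemma one_add_X_pow_eq (c : ℕ) (hc : 0 < c) :
    (1 + X ^ c : PowerSeries ℚ) = (1 - X ^ (2 * c)) * Gk c := by
  have h2 : (1 - X ^ (2 * c) : PowerSeries ℚ) = (1 - X ^ c) * (1 + X ^ c) := by
    rw [two_mul, pow_add]; ring
  rw [h2]
  calc (1 + X ^ c : PowerSeries ℚ) = (1 + X ^ c) * ((1 - X ^ c) * Gk c) := by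
        rw [Gk_mul c hc, mul_one]
    _ = (1 - X ^ c) * (1 + X ^ c) * Gk c := by ring

lemma DP_eq_OPer_mul (M : ℕ) :
    DP M = OPer M * ∏ c ∈ Finset.Ioc (M / 2) M, (1 - X ^ (2 * c) : PowerSeries ℚ) := by
  classical
  have hb : DP M = (∏ c ∈ Finset.Ioc 0 M, (1 - X ^ (2 * c) : PowerSeries ℚ))
      * ∏ c ∈ Finset.Ioc 0 M, Gk c := by
    rw [DP, ← Finset.prod_mul_distrib]
    apply Finset.prod_congr rfl
    intro c hc
    exact one_add_X_pow_eq c (Finset.mem_Ioc.mp hc).1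
  have hc : (∏ c ∈ Finset.Ioc 0 M, Gk c)
      = OPer M * ∏ c ∈ Finset.Ioc 0 M, (if Even c then Gk c else 1) := by
    rw [OPer, ← Finset.prod_mul_distrib]
    apply Finset.prod_congr rfl
    intro c _
    by_cases h : Even c <;> simp [h]
  have hd : (∏ c ∈ Finset.Ioc 0 M, (1 - X ^ (2 * c) : PowerSeries ℚ))
      = (∏ c ∈ Finset.Ioc 0 (M / 2), (1 - X ^ (2 * c) : PowerSeries ℚ))
        * ∏ c ∈ Finset.Ioc (M / 2) M, (1 - X ^ (2 * c) : PowerSeries ℚ) := by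
    rw [Finset.prod_Ioc_consecutive _ (Nat.zero_le _) (Nat.div_le_self M 2)]
  have himg : (Finset.Ioc 0 M).filter (fun c => Even c)
      = (Finset.Ioc 0 (M / 2)).image (fun c => 2 * c) := by
    ext e
    simp only [Finset.mem_filter, Finset.mem_Ioc, Finset.mem_image]
    constructor
    · rintro ⟨⟨h1, h2⟩, he⟩
      rcases he with ⟨c, rfl⟩
      exact ⟨c, ⟨by omega, by omega⟩, by ring⟩
    · rintro ⟨c, ⟨h1, h2⟩, rfl⟩
      exact ⟨⟨by omega, by omega⟩, ⟨c, by ring⟩⟩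
  have he : (∏ c ∈ Finset.Ioc 0 M, (if Even c then Gk c else 1))
      = ∏ c ∈ Finset.Ioc 0 (M / 2), Gk (2 * c) := by
    rw [← Finset.prod_filter, himg, Finset.prod_image]
    intro a _ b _ h
    simp only at h
    omega
  have hf : (∏ c ∈ Finset.Ioc 0 (M / 2), (1 - X ^ (2 * c) : PowerSeries ℚ))
      * ∏ c ∈ Finset.Ioc 0 (M / 2), Gk (2 * c) = 1 := by
    rw [← Finset.prod_mul_distrib]
    rw [Finset.prod_congr rfl (fun c hc => Gk_mul (2 * c)
      (by have := (Finset.mem_Ioc.mp hc).1; omega))]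
    exact Finset.prod_const_one
  rw [hb, hc, hd, he]
  calc (∏ c ∈ Finset.Ioc 0 (M / 2), (1 - X ^ (2 * c) : PowerSeries ℚ))
        * (∏ c ∈ Finset.Ioc (M / 2) M, (1 - X ^ (2 * c) : PowerSeries ℚ))
        * (OPer M * ∏ c ∈ Finset.Ioc 0 (M / 2), Gk (2 * c))
      = OPer M * (∏ c ∈ Finset.Ioc (M / 2) M, (1 - X ^ (2 * c) : PowerSeries ℚ))
        * ((∏ c ∈ Finset.Ioc 0 (M / 2), (1 - X ^ (2 * c) : PowerSeries ℚ))
          * ∏ c ∈ Finset.Ioc 0 (M / 2), Gk (2 * c)) := by ring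
    _ = _ := by rw [hf, mul_one]

lemma coeff_DP_eq_coeff_OPer (M n : ℕ) (hn : n ≤ M) :
    (coeff n) (DP M) = (coeff n) (OPer M) := by
  rw [DP_eq_OPer_mul]
  apply coeff_mul_junk (t := M + 1) _ (by omega)
  apply junk_prod
  intro c hc
  have hc1 := (Finset.mem_Ioc.mp hc).1
  have : (1 - X ^ (2 * c) : PowerSeries ℚ) - 1 = -(X ^ (2 * c)) := by ring
  rw [this, dvd_neg]
  exact pow_dvd_pow X (by omega)

lemma DF_eq_distincts (N : ℕ) : DF N N = Nat.Partition.distincts N := by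
  rw [DF, Nat.Partition.distincts]
  apply Finset.filter_congr
  intro p _
  constructor
  · rintro ⟨h, -⟩; exact h
  · intro h; exact ⟨h, fun i hi => parts_le_sum p hi⟩

lemma OF_eq_odds (N : ℕ) : OF N N = Nat.Partition.odds N := by
  rw [OF, Nat.Partition.odds]
  apply Finset.filter_congr
  intro p _
  constructor
  · rintro ⟨h, -⟩; exact h
  · intro h; exact ⟨h, fun i hi => parts_le_sum p hi⟩

/-- Euler's partition theorem (cardinality form). -/
lemma euler_card (N : ℕ) :
    ((Nat.Partition.odds N).card : ℚ) = ((Nat.Partition.distincts N).card : ℚ) := by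
  rw [← DF_eq_distincts, ← OF_eq_odds, ← coeff_DP (N) N, ← coeff_OPer N N,
    coeff_DP_eq_coeff_OPer N N le_rfl]

noncomputable def dQ (N : ℕ) : ℚ := ((Nat.Partition.distincts N).card : ℚ)
noncomputable def oQ (N : ℕ) : ℚ := ((Nat.Partition.odds N).card : ℚ)

lemma parts_card_le {N : ℕ} (p : Nat.Partition N) : Multiset.card p.parts ≤ N := by
  have hs := p.parts_sum
  have haux : ∀ m : Multiset ℕ, (∀ i ∈ m, 0 < i) → Multiset.card m ≤ m.sum := by
    intro m
    induction m using Multiset.induction with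
    | empty => simp
    | @cons a s ih =>
      intro h
      rw [Multiset.card_cons, Multiset.sum_cons]
      have h1 := h a (Multiset.mem_cons_self a s)
      have h2 := ih (fun i hi => h i (Multiset.mem_cons_of_mem hi))
      omega
  have := haux p.parts (fun i hi => p.parts_pos hi)
  omega

/-- expand total number of parts as a double sum of counting indicators -/
lemma card_parts_expand {N : ℕ} (s : Finset (Nat.Partition N)) :
    ∑ p ∈ s, ((Multiset.card p.parts : ℕ) : ℚ)
      = ∑ k ∈ Finset.range (N + 1), ∑ i ∈ Finset.range N,
          (((s.filter (fun p => i + 1 ≤ p.parts.count k)).card : ℕ) : ℚ) := by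
  classical
  have key : ∀ p ∈ s, ((Multiset.card p.parts : ℕ) : ℚ)
      = ∑ k ∈ Finset.range (N + 1), ∑ i ∈ Finset.range N,
          (if i + 1 ≤ p.parts.count k then (1 : ℚ) else 0) := by
    intro p _
    have h1 : Multiset.card p.parts = ∑ k ∈ Finset.range (N + 1), p.parts.count k := by
      rw [← Multiset.toFinset_sum_count_eq p.parts]
      apply Finset.sum_subset
      · intro k hk
        rw [Multiset.mem_toFinset] at hk
        have := parts_le_sum p hk
        rw [Finset.mem_range]
        omega
      · intro k _ hk
        rw [Multiset.mem_toFinset] at hk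
        exact Multiset.count_eq_zero.mpr hk
    rw [h1]
    push_cast
    apply Finset.sum_congr rfl
    intro k _
    have hc : p.parts.count k ≤ N :=
      le_trans (Multiset.count_le_card k p.parts) (parts_card_le p)
    have h2 : (Finset.range N).filter (fun i => i + 1 ≤ p.parts.count k)
        = Finset.range (p.parts.count k) := by
      ext i
      simp only [Finset.mem_filter, Finset.mem_range]
      omega
    rw [Finset.sum_boole, h2, Finset.card_range]
  rw [Finset.sum_congr rfl key, Finset.sum_comm]
  apply Finset.sum_congr rfl
  intro k _
  rw [Finset.sum_comm]
  apply Finset.sum_congr rfl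
  intro i _
  rw [Finset.sum_boole]

lemma rem_odds (N k j : ℕ) (hk : ¬ Even k) (hj : 0 < j) :
    (((Nat.Partition.odds N).filter (fun p => j ≤ p.parts.count k)).card : ℚ)
      = if k * j ≤ N then oQ (N - k * j) else 0 := by
  classical
  have hk0 : 0 < k := by
    rcases Nat.eq_zero_or_pos k with rfl | h
    · exact absurd Even.zero hk
    · exact h
  rw [Nat.Partition.odds, Nat.Partition.restricted, Finset.filter_filter]
  by_cases h : k * j ≤ N
  · rw [if_pos h]
    have := card_remove N k j hk0
      (fun m => ∀ i ∈ m, ¬ Even i) (fun m => ∀ i ∈ m, ¬ Even i)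
      (fun m => by
        constructor
        · intro hall i hi
          exact hall i (Multiset.mem_add.mpr (Or.inr hi))
        · intro hall i hi
          rcases Multiset.mem_add.mp hi with h' | h'
          · rw [Multiset.eq_of_mem_replicate h']; exact hk
          · exact hall i h')
      (N - k * j) (by omega)
    rw [this, oQ, Nat.Partition.odds, Nat.Partition.restricted]
  · rw [if_neg h]
    have := card_remove_zero N k j hj (fun m => ∀ i ∈ m, ¬ Even i) (by omega)
    rw [this, Nat.cast_zero]

lemma rem_dist (N k : ℕ) (hk : 0 < k) (hkN : k ≤ N) :
    (((Nat.Partition.distincts N).filter (fun p => 1 ≤ p.parts.count k)).card : ℚ)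
      = dQ (N - k)
        - (((Nat.Partition.distincts (N - k)).filter (fun p => 1 ≤ p.parts.count k)).card : ℚ) := by
  classical
  rw [Nat.Partition.distincts, Finset.filter_filter]
  have hmain := card_remove N k 1 hk
    (fun m => m.Nodup) (fun m => m.Nodup ∧ m.count k = 0)
    (fun m => by
      simp only [Multiset.replicate_one, Multiset.singleton_add, Multiset.nodup_cons,
        Multiset.count_eq_zero]
      tauto)
    (N - k) (by omega)
  rw [hmain]
  have hsplit := card_split (N - k) k (fun m => m.Nodup)
  have h2 : ((Finset.univ : Finset (Nat.Partition (N - k))).filter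
      (fun p => p.parts.Nodup ∧ 1 ≤ p.parts.count k))
      = (Nat.Partition.distincts (N - k)).filter (fun p => 1 ≤ p.parts.count k) := by
    rw [Nat.Partition.distincts, Finset.filter_filter]
  have h3 : dQ (N - k) = (((Finset.univ : Finset (Nat.Partition (N - k))).filter
      (fun p => p.parts.Nodup)).card : ℚ) := by
    rw [dQ, Nat.Partition.distincts]
  rw [h3, ← h2]
  rw [hsplit]
  push_cast
  ring

lemma rem_dist_zero (N k : ℕ) (h : ¬ k ≤ N) :
    (((Nat.Partition.distincts N).filter (fun p => 1 ≤ p.parts.count k)).card : ℚ) = 0 := by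
  classical
  rcases Nat.eq_zero_or_pos k with rfl | hk0
  · omega
  rw [Nat.Partition.distincts, Finset.filter_filter]
  have := card_remove_zero N k 1 (by omega) (fun m => m.Nodup) (by omega)
  rw [this, Nat.cast_zero]

/-- alternating expansion of the number of distinct partitions containing part k -/
lemma f_expand (N : ℕ) : ∀ k, 0 < k →
    (((Nat.Partition.distincts N).filter (fun p => 1 ≤ p.parts.count k)).card : ℚ)
      = ∑ i ∈ Finset.range N,
          ((-1 : ℚ)) ^ i * (if k * (i + 1) ≤ N then dQ (N - k * (i + 1)) else 0) := by
  induction N using Nat.strong_induction_on with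
  | _ N ihN =>
    intro k hk
    by_cases hkN : k ≤ N
    · have hN1 : 1 ≤ N := le_trans hk hkN
      obtain ⟨N', rfl⟩ : ∃ N', N = N' + 1 := ⟨N - 1, by omega⟩
      rw [rem_dist (N' + 1) k hk hkN]
      have hrec := ihN (N' + 1 - k) (by omega) k hk
      rw [hrec]
      rw [Finset.sum_range_succ']
      have h0 : ((-1 : ℚ)) ^ 0
          * (if k * (0 + 1) ≤ N' + 1 then dQ (N' + 1 - k * (0 + 1)) else 0)
          = dQ (N' + 1 - k) := by
        rw [pow_zero, one_mul, if_pos (by omega)]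
        norm_num
      have hshift : ∀ i, ((-1 : ℚ)) ^ (i + 1)
          * (if k * (i + 1 + 1) ≤ N' + 1 then dQ (N' + 1 - k * (i + 1 + 1)) else 0)
          = - (((-1 : ℚ)) ^ i
            * (if k * (i + 1) ≤ N' + 1 - k then dQ (N' + 1 - k - k * (i + 1)) else 0)) := by
        intro i
        have hkk : k * (i + 1 + 1) = k * (i + 1) + k := by ring
        have hcond : (k * (i + 1 + 1) ≤ N' + 1) ↔ (k * (i + 1) ≤ N' + 1 - k) := by omega
        have harg : N' + 1 - k * (i + 1 + 1) = N' + 1 - k - k * (i + 1) := by omega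
        rw [pow_succ]
        by_cases hcc : k * (i + 1) ≤ N' + 1 - k
        · rw [if_pos (hcond.mpr hcc), if_pos hcc, harg]
          ring
        · rw [if_neg (fun hc => hcc (hcond.mp hc)), if_neg hcc]
          ring
      rw [Finset.sum_congr rfl (fun i _ => hshift i), h0, Finset.sum_neg_distrib]
      have hext : ∑ i ∈ Finset.range N', ((-1 : ℚ)) ^ i
            * (if k * (i + 1) ≤ N' + 1 - k then dQ (N' + 1 - k - k * (i + 1)) else 0)
          = ∑ i ∈ Finset.range (N' + 1 - k), ((-1 : ℚ)) ^ i
            * (if k * (i + 1) ≤ N' + 1 - k then dQ (N' + 1 - k - k * (i + 1)) else 0) := by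
        symm
        apply Finset.sum_subset
        · apply Finset.range_subset_range.mpr
          omega
        · intro i _ hi
          rw [Finset.mem_range] at hi
          rw [if_neg (by nlinarith), mul_zero]
      rw [hext]
      ring
    · rw [rem_dist_zero N k hkN]
      symm
      apply Finset.sum_eq_zero
      intro i _
      rw [if_neg (by nlinarith), mul_zero]

lemma A_expand (N : ℕ) :
    ∑ p ∈ Nat.Partition.odds N, ((Multiset.card p.parts : ℕ) : ℚ)
      = ∑ k ∈ Finset.range (N + 1), ∑ i ∈ Finset.range N,
          (if ¬ Even k ∧ k * (i + 1) ≤ N then oQ (N - k * (i + 1)) else 0) := by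
  classical
  rw [card_parts_expand]
  apply Finset.sum_congr rfl
  intro k _
  apply Finset.sum_congr rfl
  intro i _
  by_cases hk : Even k
  · rw [if_neg (by tauto)]
    have hempty : (Nat.Partition.odds N).filter (fun p => i + 1 ≤ p.parts.count k) = ∅ := by
      rw [Finset.filter_eq_empty_iff]
      intro p hp
      rw [Nat.Partition.odds, Nat.Partition.restricted, Finset.mem_filter] at hp
      intro hcount
      have hmem : k ∈ p.parts := Multiset.count_pos.mp (by omega)
      exact hp.2 k hmem hk
    rw [hempty]
    simp
  · have := rem_odds N k (i + 1) hk (by omega)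
    rw [this]
    by_cases hle : k * (i + 1) ≤ N
    · rw [if_pos hle, if_pos ⟨hk, hle⟩]
    · rw [if_neg hle, if_neg (by tauto)]

lemma B_expand (N : ℕ) :
    ∑ p ∈ Nat.Partition.distincts N, ((Multiset.card p.parts : ℕ) : ℚ)
      = ∑ k ∈ Finset.range (N + 1), ∑ i ∈ Finset.range N,
          ((-1 : ℚ)) ^ i * (if 0 < k ∧ k * (i + 1) ≤ N then dQ (N - k * (i + 1)) else 0) := by
  classical
  rw [card_parts_expand]
  apply Finset.sum_congr rfl
  intro k _
  -- inner sums over i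
  by_cases hk : 0 < k
  · -- LHS: only i = 0 contributes
    have hzero : ∀ i, 1 ≤ i →
        ((Nat.Partition.distincts N).filter (fun p => i + 1 ≤ p.parts.count k)).card = 0 := by
      intro i hi
      rw [Finset.card_eq_zero, Finset.filter_eq_empty_iff]
      intro p hp
      rw [Nat.Partition.distincts, Finset.mem_filter] at hp
      have := Multiset.nodup_iff_count_le_one.mp hp.2 k
      omega
    have hLHS : ∑ i ∈ Finset.range N,
        (((Nat.Partition.distincts N).filter (fun p => i + 1 ≤ p.parts.count k)).card : ℚ)
        = if 1 ≤ N then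
            (((Nat.Partition.distincts N).filter (fun p => 1 ≤ p.parts.count k)).card : ℚ)
          else 0 := by
      by_cases hN : 1 ≤ N
      · rw [if_pos hN]
        rw [Finset.sum_eq_single_of_mem 0 (Finset.mem_range.mpr (by omega))
          (fun i _ hi => by rw [hzero i (by omega), Nat.cast_zero])]
      · rw [if_neg hN]
        have : N = 0 := by omega
        subst this
        simp
    rw [hLHS]
    by_cases hN : 1 ≤ N
    · rw [if_pos hN, f_expand N k hk]
      apply Finset.sum_congr rfl
      intro i _
      congr 1
      by_cases hle : k * (i + 1) ≤ N
      · rw [if_pos hle, if_pos ⟨hk, hle⟩]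
      · rw [if_neg hle, if_neg (by tauto)]
    · have : N = 0 := by omega
      subst this
      simp
  · -- k = 0 : count is 0
    have hk0 : k = 0 := by omega
    subst hk0
    have hcount : ∀ p : Nat.Partition N, p.parts.count 0 = 0 := by
      intro p
      rw [Multiset.count_eq_zero]
      intro h
      exact absurd (p.parts_pos h) (by omega)
    apply Finset.sum_congr rfl
    intro i _
    rw [if_neg (by omega), mul_zero]
    rw [Finset.card_eq_zero.mpr, Nat.cast_zero]
    rw [Finset.filter_eq_empty_iff]
    intro p _
    rw [hcount p]
    omega

noncomputable def eQ (K : ℕ) : ℚ :=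
  ∑ n ∈ Finset.range K, (if 2 * (n + 1) ≤ K ∧ 2 * (n + 1) ∣ K then (1 : ℚ) else 0)

/-- the divisor-pair swap identity -/
lemma swap_sum (N : ℕ) :
    ∑ k ∈ Finset.range (N + 1), ∑ i ∈ Finset.range N,
        (if 0 < k ∧ k * (i + 1) ≤ N then ((-1 : ℚ)) ^ k * dQ (N - k * (i + 1)) else 0)
      = ∑ k ∈ Finset.range (N + 1), ∑ i ∈ Finset.range N,
        (if 0 < k ∧ k * (i + 1) ≤ N then ((-1 : ℚ)) ^ (i + 1) * dQ (N - k * (i + 1)) else 0) := by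
  classical
  rw [← Finset.sum_product', ← Finset.sum_product']
  rw [← Finset.sum_filter, ← Finset.sum_filter]
  apply Finset.sum_nbij' (i := fun q : ℕ × ℕ => (q.2 + 1, q.1 - 1))
    (j := fun q : ℕ × ℕ => (q.2 + 1, q.1 - 1))
  · intro q hq
    simp only [Finset.mem_filter, Finset.mem_product, Finset.mem_range] at hq ⊢
    obtain ⟨⟨h1, h2⟩, h3, h4⟩ := hq
    have hk1 : q.1 * (q.2 + 1) = (q.2 + 1) * (q.1 - 1 + 1) := by
      rw [mul_comm]
      congr 1
      omega
    refine ⟨⟨?_, ?_⟩, ?_, ?_⟩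
    · nlinarith
    · nlinarith
    · omega
    · omega
  · intro q hq
    simp only [Finset.mem_filter, Finset.mem_product, Finset.mem_range] at hq ⊢
    obtain ⟨⟨h1, h2⟩, h3, h4⟩ := hq
    have hk1 : q.1 * (q.2 + 1) = (q.2 + 1) * (q.1 - 1 + 1) := by
      rw [mul_comm]
      congr 1
      omega
    refine ⟨⟨?_, ?_⟩, ?_, ?_⟩
    · nlinarith
    · nlinarith
    · omega
    · omega
  · intro q hq
    rw [Finset.mem_filter, Finset.mem_product] at hq
    obtain ⟨-, h3, -⟩ := hq
    ext <;> simp <;> omega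
  · intro q hq
    rw [Finset.mem_filter, Finset.mem_product] at hq
    obtain ⟨-, h3, -⟩ := hq
    ext <;> simp <;> omega
  · intro q hq
    rw [Finset.mem_filter, Finset.mem_product] at hq
    obtain ⟨⟨h1, h2⟩, h3, h4⟩ := hq
    have he : q.1 * (q.2 + 1) = (q.2 + 1) * (q.1 - 1 + 1) := by
      rw [mul_comm]
      congr 1
      omega
    have hp : ((-1 : ℚ)) ^ q.1 = ((-1 : ℚ)) ^ (q.1 - 1 + 1) := by
      congr 1
      omega
    rw [hp, ← he]

lemma conv_eq_SE (N : ℕ) :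
    ∑ a ∈ Finset.range (N + 1), dQ a * eQ (N - a)
      = ∑ k ∈ Finset.range (N + 1), ∑ i ∈ Finset.range N,
          (if Even k ∧ 0 < k ∧ k * (i + 1) ≤ N then dQ (N - k * (i + 1)) else 0) := by
  classical
  have step1 : ∀ a ∈ Finset.range (N + 1), dQ a * eQ (N - a)
      = ∑ n ∈ Finset.range N,
          (if 2 * (n + 1) ≤ N - a ∧ 2 * (n + 1) ∣ N - a then dQ a else 0) := by
    intro a ha
    rw [eQ, Finset.mul_sum]
    have hext : ∑ n ∈ Finset.range (N - a),
        (dQ a * if 2 * (n + 1) ≤ N - a ∧ 2 * (n + 1) ∣ N - a then (1 : ℚ) else 0)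
        = ∑ n ∈ Finset.range N,
        (dQ a * if 2 * (n + 1) ≤ N - a ∧ 2 * (n + 1) ∣ N - a then (1 : ℚ) else 0) := by
      apply Finset.sum_subset
      · apply Finset.range_subset_range.mpr; omega
      · intro n _ hn
        rw [Finset.mem_range] at hn
        rw [if_neg (by omega), mul_zero]
    rw [hext]
    apply Finset.sum_congr rfl
    intro n _
    by_cases h : 2 * (n + 1) ≤ N - a ∧ 2 * (n + 1) ∣ N - a
    · rw [if_pos h, if_pos h, mul_one]
    · rw [if_neg h, if_neg h, mul_zero]
  rw [Finset.sum_congr rfl step1]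
  rw [← Finset.sum_product', ← Finset.sum_product']
  rw [← Finset.sum_filter, ← Finset.sum_filter]
  apply Finset.sum_nbij'
    (i := fun q : ℕ × ℕ => (2 * (q.2 + 1), (N - q.1) / (2 * (q.2 + 1)) - 1))
    (j := fun q : ℕ × ℕ => (N - q.1 * (q.2 + 1), q.1 / 2 - 1))
  · -- hi
    intro q hq
    simp only [Finset.mem_filter, Finset.mem_product, Finset.mem_range] at hq ⊢
    obtain ⟨⟨h1, h2⟩, h3, h4⟩ := hq
    obtain ⟨m, hm⟩ := h4
    have hm1 : 1 ≤ m := by nlinarith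
    have hdiv : (N - q.1) / (2 * (q.2 + 1)) = m := by
      rw [hm]; exact Nat.mul_div_cancel_left m (by omega)
    rw [hdiv]
    have hmle : m ≤ N := by
      have := Nat.le_mul_of_pos_left m (by omega : 0 < 2 * (q.2 + 1))
      omega
    refine ⟨⟨by omega, by omega⟩, ⟨q.2 + 1, by ring⟩, by omega, ?_⟩
    have : 2 * (q.2 + 1) * (m - 1 + 1) = 2 * (q.2 + 1) * m := by
      congr 1; omega
    rw [this, ← hm]
    omega
  · -- hj
    intro q hq
    simp only [Finset.mem_filter, Finset.mem_product, Finset.mem_range] at hq ⊢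
    obtain ⟨⟨h1, h2⟩, hev, h5, h6⟩ := hq
    obtain ⟨t, ht⟩ := hev
    have ht2 : q.1 = 2 * t := by omega
    have htd : q.1 / 2 = t := by omega
    have hq1N : q.1 ≤ N := by
      have := Nat.le_mul_of_pos_right q.1 (by omega : 0 < q.2 + 1)
      omega
    refine ⟨⟨by omega, ?_⟩, ?_, ?_⟩
    · -- q.1 / 2 - 1 < N
      omega
    · -- 2 * (q.1 / 2 - 1 + 1) ≤ N - (N - q.1 * (q.2 + 1))
      have : N - (N - q.1 * (q.2 + 1)) = q.1 * (q.2 + 1) := by omega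
      rw [this, htd]
      have : 2 * (t - 1 + 1) = 2 * t := by congr 1; omega
      rw [this, ← ht2]
      nlinarith
    · -- dvd
      have : N - (N - q.1 * (q.2 + 1)) = q.1 * (q.2 + 1) := by omega
      rw [this, htd]
      have : 2 * (t - 1 + 1) = 2 * t := by congr 1; omega
      rw [this, ← ht2]
      exact Dvd.intro _ rfl
  · -- left_inv
    intro q hq
    simp only [Finset.mem_filter, Finset.mem_product, Finset.mem_range] at hq
    obtain ⟨⟨h1, h2⟩, h3, h4⟩ := hq
    obtain ⟨m, hm⟩ := h4
    have hm1 : 1 ≤ m := by nlinarith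
    have hdiv : (N - q.1) / (2 * (q.2 + 1)) = m := by
      rw [hm]; exact Nat.mul_div_cancel_left m (by omega)
    ext
    · simp only [hdiv]
      have : 2 * (q.2 + 1) * (m - 1 + 1) = 2 * (q.2 + 1) * m := by congr 1; omega
      rw [this, ← hm]
      omega
    · simp only [hdiv]
      omega
  · -- right_inv
    intro q hq
    simp only [Finset.mem_filter, Finset.mem_product, Finset.mem_range] at hq
    obtain ⟨⟨h1, h2⟩, hev, h5, h6⟩ := hq
    obtain ⟨t, ht⟩ := hev
    have ht2 : q.1 = 2 * t := by omega
    have htd : q.1 / 2 = t := by omega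
    have ht1 : 1 ≤ t := by omega
    ext
    · simp only [htd]
      omega
    · simp only [htd]
      have h7 : N - (N - q.1 * (q.2 + 1)) = q.1 * (q.2 + 1) := by omega
      have h8 : 2 * (t - 1 + 1) = q.1 := by omega
      rw [h7, h8]
      rw [Nat.mul_div_cancel_left _ (by omega : 0 < q.1)]
      omega
  · -- values
    intro q hq
    simp only [Finset.mem_filter, Finset.mem_product, Finset.mem_range] at hq
    obtain ⟨⟨h1, h2⟩, h3, h4⟩ := hq
    obtain ⟨m, hm⟩ := h4
    have hm1 : 1 ≤ m := by nlinarith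
    have hdiv : (N - q.1) / (2 * (q.2 + 1)) = m := by
      rw [hm]; exact Nat.mul_div_cancel_left m (by omega)
    simp only [hdiv]
    congr 1
    have : 2 * (q.2 + 1) * (m - 1 + 1) = 2 * (q.2 + 1) * m := by congr 1; omega
    rw [this, ← hm]
    omega

lemma oQ_eq_dQ (n : ℕ) : oQ n = dQ n := euler_card n

/-- The key identity: the convolution equals (number of parts over odds) minus
(number of parts over distincts). -/
lemma star (N : ℕ) :
    ∑ p ∈ Nat.Partition.odds N, ((Multiset.card p.parts : ℕ) : ℚ)
      - ∑ p ∈ Nat.Partition.distincts N, ((Multiset.card p.parts : ℕ) : ℚ)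
      = ∑ a ∈ Finset.range (N + 1), dQ a * eQ (N - a) := by
  classical
  rw [A_expand, B_expand, conv_eq_SE]
  simp only [oQ_eq_dQ]
  set tA : ℕ → ℕ → ℚ := fun k i =>
    if ¬ Even k ∧ k * (i + 1) ≤ N then dQ (N - k * (i + 1)) else 0 with htA
  set tB : ℕ → ℕ → ℚ := fun k i =>
    ((-1 : ℚ)) ^ i * (if 0 < k ∧ k * (i + 1) ≤ N then dQ (N - k * (i + 1)) else 0) with htB
  set tE : ℕ → ℕ → ℚ := fun k i =>
    if Even k ∧ 0 < k ∧ k * (i + 1) ≤ N then dQ (N - k * (i + 1)) else 0 with htE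
  set t1 : ℕ → ℕ → ℚ := fun k i =>
    if 0 < k ∧ k * (i + 1) ≤ N then ((-1 : ℚ)) ^ k * dQ (N - k * (i + 1)) else 0 with ht1
  set t2 : ℕ → ℕ → ℚ := fun k i =>
    if 0 < k ∧ k * (i + 1) ≤ N then ((-1 : ℚ)) ^ i * dQ (N - k * (i + 1)) else 0 with ht2
  have per : ∀ k i, tA k i - tB k i - tE k i = -(t1 k i) - t2 k i := by
    intro k i
    simp only [htA, htB, htE, ht1, ht2]
    by_cases hg : k * (i + 1) ≤ N
    · by_cases hev : Even k
      · rcases Nat.eq_zero_or_pos k with rfl | hk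
        · norm_num
        · rw [if_neg (by tauto), if_pos ⟨hk, hg⟩, if_pos ⟨hev, hk, hg⟩,
            if_pos ⟨hk, hg⟩, if_pos ⟨hk, hg⟩, hev.neg_one_pow]
          ring
      · have hk : 0 < k := by
          rcases Nat.eq_zero_or_pos k with rfl | h
          · exact absurd Even.zero hev
          · exact h
        rw [if_pos ⟨hev, hg⟩, if_pos ⟨hk, hg⟩, if_neg (fun hc => hev hc.1),
          if_pos ⟨hk, hg⟩, if_pos ⟨hk, hg⟩,
          (Nat.not_even_iff_odd.mp hev).neg_one_pow]
        ring
    · rw [if_neg (by tauto), if_neg (by tauto), if_neg (by tauto), if_neg (by tauto),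
        if_neg (by tauto)]
      ring
  have hsw : ∑ k ∈ Finset.range (N + 1), ∑ i ∈ Finset.range N, t1 k i
      = - ∑ k ∈ Finset.range (N + 1), ∑ i ∈ Finset.range N, t2 k i := by
    rw [ht1, ht2, swap_sum N]
    rw [← Finset.sum_neg_distrib]
    apply Finset.sum_congr rfl
    intro k _
    rw [← Finset.sum_neg_distrib]
    apply Finset.sum_congr rfl
    intro i _
    by_cases h : 0 < k ∧ k * (i + 1) ≤ N
    · simp only [if_pos h, pow_succ]
      ring
    · simp only [if_neg h, neg_zero]
  have hdist : ∑ k ∈ Finset.range (N + 1), ∑ i ∈ Finset.range N, tA k i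
      - ∑ k ∈ Finset.range (N + 1), ∑ i ∈ Finset.range N, tB k i
      - ∑ k ∈ Finset.range (N + 1), ∑ i ∈ Finset.range N, tE k i
      = ∑ k ∈ Finset.range (N + 1), ∑ i ∈ Finset.range N, (-(t1 k i) - t2 k i) := by
    rw [← Finset.sum_sub_distrib, ← Finset.sum_sub_distrib]
    apply Finset.sum_congr rfl
    intro k _
    rw [← Finset.sum_sub_distrib, ← Finset.sum_sub_distrib]
    apply Finset.sum_congr rfl
    intro i _
    exact per k i
  have hfin : ∑ k ∈ Finset.range (N + 1), ∑ i ∈ Finset.range N, (-(t1 k i) - t2 k i)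
      = 0 := by
    rw [Finset.sum_congr rfl (fun k _ => Finset.sum_sub_distrib _ _),
      Finset.sum_sub_distrib]
    rw [Finset.sum_congr rfl (fun k _ => Finset.sum_neg_distrib _),
      Finset.sum_neg_distrib]
    rw [hsw]
    ring
  linarith [hdist, hfin]

lemma DF_eq_distincts' (N M : ℕ) (h : N ≤ M) : DF N M = Nat.Partition.distincts N := by
  rw [DF, Nat.Partition.distincts]
  apply Finset.filter_congr
  intro p _
  constructor
  · rintro ⟨hnd, -⟩; exact hnd
  · intro hnd; exact ⟨hnd, fun i hi => le_trans (parts_le_sum p hi) h⟩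

lemma DP_range (M : ℕ) : (∏ k ∈ Finset.range M, (1 + X ^ (k + 1) : PowerSeries ℚ)) = DP M := by
  induction M with
  | zero => rw [DP]; simp
  | succ M ih =>
    have hstep : DP (M + 1) = DP M * (1 + X ^ (M + 1)) := by
      rw [DP, Finset.prod_Ioc_succ_top (Nat.zero_le _), ← DP]
    rw [Finset.prod_range_succ, ih, hstep]

lemma hasProd_FD :
    HasProd (fun k => (1 + X ^ (k + 1) : PowerSeries ℚ)) (PowerSeries.mk (fun N => dQ N)) := by
  apply tendsto_coeff
  intro d
  rw [SummationFilter.unconditional_filter, eventually_atTop]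
  refine ⟨Finset.range (d + 1), fun s hs => ?_⟩
  have hsub : Finset.range (d + 1) ⊆ s := hs
  rw [← Finset.prod_sdiff hsub, mul_comm]
  have hjunk : (X : PowerSeries ℚ) ^ (d + 1)
      ∣ (∏ k ∈ s \ Finset.range (d + 1), (1 + X ^ (k + 1) : PowerSeries ℚ)) - 1 := by
    apply junk_prod
    intro k hk
    rw [Finset.mem_sdiff, Finset.mem_range] at hk
    have : (1 + X ^ (k + 1) : PowerSeries ℚ) - 1 = X ^ (k + 1) := by ring
    rw [this]
    exact pow_dvd_pow X (by omega)
  rw [coeff_mul_junk hjunk (by omega), DP_range, coeff_DP, DF_eq_distincts' d (d + 1) (by omega),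
    PowerSeries.coeff_mk]
  rfl

lemma pochInf_eq : pochInf (-X) X = PowerSeries.mk (fun N => dQ N) := by
  rw [pochInf]
  have hfun : (fun k => (1 - (-X) * X ^ k : PowerSeries ℚ))
      = fun k => (1 + X ^ (k + 1) : PowerSeries ℚ) := by
    funext k
    ring
  rw [hfun]
  exact hasProd_FD.tprod_eq

lemma hasSum_FE :
    HasSum (fun n => (X ^ (2 * (n + 1)) * Gk (2 * (n + 1)) : PowerSeries ℚ))
      (PowerSeries.mk (fun K => eQ K)) := by
  apply tendsto_coeff
  intro d
  rw [SummationFilter.unconditional_filter, eventually_atTop]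
  refine ⟨Finset.range d, fun s hs => ?_⟩
  rw [_root_.map_sum, PowerSeries.coeff_mk]
  have hvanish : ∀ n ∈ s, n ∉ Finset.range d →
      (coeff d) (X ^ (2 * (n + 1)) * Gk (2 * (n + 1)) : PowerSeries ℚ) = 0 := by
    intro n _ hn
    rw [Finset.mem_range] at hn
    rw [mul_comm, PowerSeries.coeff_mul_X_pow', if_neg (by omega)]
  rw [← Finset.sum_subset hs hvanish]
  rw [eQ]
  apply Finset.sum_congr rfl
  intro n hn
  rw [Finset.mem_range] at hn
  rw [mul_comm, PowerSeries.coeff_mul_X_pow']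
  by_cases h1 : 2 * (n + 1) ≤ d
  · rw [if_pos h1, coeff_Gk]
    have hiff : (2 * (n + 1) ∣ d - 2 * (n + 1)) ↔ (2 * (n + 1) ∣ d) := by
      constructor
      · intro hd
        have := Nat.dvd_add hd (dvd_refl (2 * (n + 1)))
        rwa [Nat.sub_add_cancel h1] at this
      · intro hd
        exact Nat.dvd_sub hd dvd_rfl
    by_cases h2 : 2 * (n + 1) ∣ d
    · rw [if_pos (hiff.mpr h2), if_pos ⟨h1, h2⟩]
    · rw [if_neg (fun hc => h2 (hiff.mp hc)), if_neg (by tauto)]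
  · rw [if_neg h1, if_neg (by tauto)]

lemma tsum_eq_FE :
    (∑' n : ℕ, X ^ (2 * (n + 1)) * (1 - X ^ (2 * (n + 1)) : PowerSeries ℚ)⁻¹)
      = PowerSeries.mk (fun K => eQ K) := by
  have hfun : (fun n => (X ^ (2 * (n + 1)) * (1 - X ^ (2 * (n + 1)) : PowerSeries ℚ)⁻¹))
      = fun n => (X ^ (2 * (n + 1)) * Gk (2 * (n + 1)) : PowerSeries ℚ) := by
    funext n
    rw [Gk_eq_inv (2 * (n + 1)) (by omega)]
  rw [hfun]
  exact hasSum_FE.tsum_eq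

/-- `2(-q;q)_∞ Σ_{n≥1} q^{2n}/(1-q^{2n})` equals twice the generating
function for the number of parts over partitions into odd parts minus twice that over
partitions into distinct parts. -/
theorem parts_odd_minus_distinct :
    2 * pochInf (-X) X
        * ∑' n : ℕ, X ^ (2 * (n + 1)) * (1 - X ^ (2 * (n + 1)) : PowerSeries ℚ)⁻¹
      = 2 * PowerSeries.mk (fun N => ∑ l ∈ Nat.Partition.odds N, (l.parts.card : ℚ))
        - 2 * PowerSeries.mk (fun N => ∑ m ∈ Nat.Partition.distincts N, (m.parts.card : ℚ)) := by
  rw [pochInf_eq, tsum_eq_FE]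
  have key : (PowerSeries.mk (fun N => dQ N)) * (PowerSeries.mk (fun K => eQ K))
      = PowerSeries.mk (fun N => ∑ l ∈ Nat.Partition.odds N, ((Multiset.card l.parts : ℕ) : ℚ))
        - PowerSeries.mk
            (fun N => ∑ m ∈ Nat.Partition.distincts N, ((Multiset.card m.parts : ℕ) : ℚ)) := by
    ext N
    rw [_root_.map_sub, PowerSeries.coeff_mk, PowerSeries.coeff_mk, PowerSeries.coeff_mul]
    simp only [PowerSeries.coeff_mk]
    rw [Finset.Nat.sum_antidiagonal_eq_sum_range_succ_mk]
    exact (_root_.star N).symm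
  calc (2 : PowerSeries ℚ) * PowerSeries.mk (fun N => dQ N) * PowerSeries.mk (fun K => eQ K)
      = 2 * (PowerSeries.mk (fun N => dQ N) * PowerSeries.mk (fun K => eQ K)) := by ring
    _ = _ := by rw [key]; ring
end

section
/- Fine's transformation: Σ_{n≥0} ((aq;q)_n/(bq;q)_n) t^n = ((1−b)/(1−t)) Σ_{n≥0} ((atq/b;q)_n/(tq;q)_n) b^n, valid as an identity of formal power series (or of analytic functions for |q|,|t|,|b|<1, b≠0). -/
open Finset Filter

namespace FineAux

noncomputable def cc (a b q : ℂ) (n : ℕ) : ℂ :=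
  (∏ k ∈ range n, (1 - a * q * q ^ k)) / (∏ k ∈ range n, (1 - b * q * q ^ k))

noncomputable def F (a b q t : ℂ) : ℂ := ∑' n : ℕ, cc a b q n * t ^ n

noncomputable def M (a q : ℂ) : ℝ :=
  Real.exp (‖a * q‖ / (1 - ‖q‖) + ‖q‖ / ((1 - ‖q‖) * (1 - ‖q‖)))

noncomputable def Pp (a b q t : ℂ) (N : ℕ) : ℂ :=
  ∏ k ∈ range N, ((b - a * t * q * q ^ k) / (1 - t * q ^ k))

lemma one_sub_ne {x : ℂ} (h : ‖x‖ < 1) : (1 : ℂ) - x ≠ 0 := by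
  intro h0
  rw [sub_eq_zero] at h0
  rw [← h0] at h
  simp at h

lemma exp_aux {v V : ℝ} (h0 : 0 ≤ v) (hvV : v ≤ V) (hV : V < 1) :
    Real.exp (-(v / (1 - V))) ≤ 1 - v := by
  have hv1 : v < 1 := lt_of_le_of_lt hvV hV
  have h1V : (0:ℝ) < 1 - V := by linarith
  have h1v : (0:ℝ) < 1 - v := by linarith
  have key : 1 / (1 - v) ≤ Real.exp (v / (1 - V)) := by
    have h2 : v / (1 - v) ≤ v / (1 - V) := by gcongr <;> linarith
    have h3 : 1 / (1 - v) = 1 + v / (1 - v) := by field_simp; ring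
    have h4 := Real.add_one_le_exp (v / (1 - V))
    linarith
  rw [Real.exp_neg]
  have hpos : (0:ℝ) < 1 / (1 - v) := by positivity
  have h5 : (Real.exp (v / (1 - V)))⁻¹ ≤ (1 / (1 - v))⁻¹ :=
    inv_anti₀ hpos key
  simpa [one_div, inv_inv] using h5

lemma geo_sum_le {r : ℝ} (h0 : 0 ≤ r) (h1 : r < 1) (n : ℕ) :
    ∑ k ∈ range n, r ^ k ≤ 1 / (1 - r) := by
  have hs : Summable (fun k : ℕ => r ^ k) := summable_geometric_of_lt_one h0 h1
  calc ∑ k ∈ range n, r ^ k ≤ ∑' k : ℕ, r ^ k :=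
        Summable.sum_le_tsum _ (fun i _ => by positivity) hs
    _ = 1 / (1 - r) := by rw [tsum_geometric_of_lt_one h0 h1, one_div]

lemma prod_norm_le (c q : ℂ) (hq : ‖q‖ < 1) (n : ℕ) :
    ∏ k ∈ range n, ‖1 - c * q ^ k‖ ≤ Real.exp (‖c‖ / (1 - ‖q‖)) := by
  have h1 : ∏ k ∈ range n, ‖1 - c * q ^ k‖
      ≤ ∏ k ∈ range n, (1 + ‖c‖ * ‖q‖ ^ k) := by
    apply Finset.prod_le_prod (fun i _ => norm_nonneg _)
    intro i _
    calc ‖1 - c * q ^ i‖ ≤ ‖(1:ℂ)‖ + ‖c * q ^ i‖ := norm_sub_le _ _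
      _ = 1 + ‖c‖ * ‖q‖ ^ i := by simp [norm_mul, norm_pow]
  refine h1.trans ?_
  have h2 : ∏ k ∈ range n, (1 + ‖c‖ * ‖q‖ ^ k)
      ≤ ∏ k ∈ range n, Real.exp (‖c‖ * ‖q‖ ^ k) := by
    apply Finset.prod_le_prod (fun i _ => by positivity)
    intro i _
    have := Real.add_one_le_exp (‖c‖ * ‖q‖ ^ i)
    linarith
  refine h2.trans ?_
  rw [← Real.exp_sum]
  apply Real.exp_le_exp.2
  rw [← Finset.mul_sum, div_eq_mul_one_div]
  exact mul_le_mul_of_nonneg_left (geo_sum_le (norm_nonneg q) hq n) (norm_nonneg c)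

lemma prod_norm_ge (c q : ℂ) (hq : ‖q‖ < 1) (hc : ‖c‖ ≤ ‖q‖) (n : ℕ) :
    Real.exp (-(‖q‖ / ((1 - ‖q‖) * (1 - ‖q‖)))) ≤ ∏ k ∈ range n, ‖1 - c * q ^ k‖ := by
  have hr0 : 0 ≤ ‖q‖ := norm_nonneg q
  have h1r : (0:ℝ) < 1 - ‖q‖ := by linarith
  have step : ∀ k : ℕ, Real.exp (-(‖q‖ * ‖q‖ ^ k / (1 - ‖q‖))) ≤ ‖1 - c * q ^ k‖ := by
    intro k
    have hpow : ‖q‖ ^ k ≤ 1 := pow_le_one₀ hr0 hq.le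
    have h1 : 1 - ‖c‖ * ‖q‖ ^ k ≤ ‖1 - c * q ^ k‖ := by
      have h2 := norm_sub_norm_le (1 : ℂ) (c * q ^ k)
      simp only [norm_one, norm_mul, norm_pow] at h2
      linarith
    have hv0 : 0 ≤ ‖c‖ * ‖q‖ ^ k := by positivity
    have hvV : ‖c‖ * ‖q‖ ^ k ≤ ‖q‖ := by
      calc ‖c‖ * ‖q‖ ^ k ≤ ‖q‖ * 1 := mul_le_mul hc hpow (by positivity) hr0
        _ = ‖q‖ := mul_one _
    have h3 := exp_aux hv0 hvV hq
    have h4 : Real.exp (-(‖q‖ * ‖q‖ ^ k / (1 - ‖q‖)))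
        ≤ Real.exp (-(‖c‖ * ‖q‖ ^ k / (1 - ‖q‖))) := by
      apply Real.exp_le_exp.2
      apply neg_le_neg
      gcongr
    exact le_trans h4 (le_trans h3 h1)
  calc Real.exp (-(‖q‖ / ((1 - ‖q‖) * (1 - ‖q‖))))
      ≤ Real.exp (∑ k ∈ range n, -(‖q‖ * ‖q‖ ^ k / (1 - ‖q‖))) := by
        apply Real.exp_le_exp.2
        have hS : ∑ k ∈ range n, ‖q‖ * ‖q‖ ^ k / (1 - ‖q‖) ≤ ‖q‖ / ((1 - ‖q‖) * (1 - ‖q‖)) := by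
          have he : ∑ k ∈ range n, ‖q‖ * ‖q‖ ^ k / (1 - ‖q‖)
              = (‖q‖ / (1 - ‖q‖)) * ∑ k ∈ range n, ‖q‖ ^ k := by
            rw [Finset.mul_sum]
            exact Finset.sum_congr rfl (fun k _ => by ring)
          rw [he]
          calc (‖q‖ / (1 - ‖q‖)) * ∑ k ∈ range n, ‖q‖ ^ k
              ≤ (‖q‖ / (1 - ‖q‖)) * (1 / (1 - ‖q‖)) :=
                mul_le_mul_of_nonneg_left (geo_sum_le hr0 hq n) (by positivity)
            _ = ‖q‖ / ((1 - ‖q‖) * (1 - ‖q‖)) := by field_simp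
        have hneg : ∑ k ∈ range n, -(‖q‖ * ‖q‖ ^ k / (1 - ‖q‖))
            = -∑ k ∈ range n, (‖q‖ * ‖q‖ ^ k / (1 - ‖q‖)) := by
          simp [Finset.sum_neg_distrib]
        rw [hneg]
        linarith
    _ = ∏ k ∈ range n, Real.exp (-(‖q‖ * ‖q‖ ^ k / (1 - ‖q‖))) := Real.exp_sum _ _
    _ ≤ ∏ k ∈ range n, ‖1 - c * q ^ k‖ :=
        Finset.prod_le_prod (fun i _ => (Real.exp_pos _).le) (fun i _ => step i)


lemma den_fac_ne {b q : ℂ} (hq : ‖q‖ < 1) (hb : ‖b‖ ≤ 1) (k : ℕ) :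
    (1 : ℂ) - b * q * q ^ k ≠ 0 := by
  apply one_sub_ne
  have hpow : ‖q‖ ^ k ≤ 1 := pow_le_one₀ (norm_nonneg q) hq.le
  have : ‖b * q * q ^ k‖ = ‖b‖ * ‖q‖ * ‖q‖ ^ k := by
    rw [norm_mul, norm_mul, norm_pow]
  rw [this]
  calc ‖b‖ * ‖q‖ * ‖q‖ ^ k ≤ 1 * ‖q‖ * 1 := by
        apply mul_le_mul (mul_le_mul hb le_rfl (norm_nonneg q) zero_le_one) hpow
          (by positivity) (by positivity)
    _ = ‖q‖ := by ring
    _ < 1 := hq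

lemma den_prod_ne {b q : ℂ} (hq : ‖q‖ < 1) (hb : ‖b‖ ≤ 1) (n : ℕ) :
    (∏ k ∈ range n, (1 - b * q * q ^ k)) ≠ 0 :=
  Finset.prod_ne_zero_iff.2 (fun k _ => den_fac_ne hq hb k)

lemma cc_bound {b : ℂ} (a q : ℂ) (hq : ‖q‖ < 1) (hb : ‖b‖ ≤ 1) (n : ℕ) :
    ‖cc a b q n‖ ≤ M a q := by
  have hnum : ‖∏ k ∈ range n, (1 - a * q * q ^ k)‖ ≤ Real.exp (‖a * q‖ / (1 - ‖q‖)) := by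
    rw [norm_prod]
    have := prod_norm_le (a * q) q hq n
    simpa [mul_assoc] using this
  have hden : Real.exp (-(‖q‖ / ((1 - ‖q‖) * (1 - ‖q‖))))
      ≤ ‖∏ k ∈ range n, (1 - b * q * q ^ k)‖ := by
    rw [norm_prod]
    have hc : ‖b * q‖ ≤ ‖q‖ := by
      rw [norm_mul]
      nlinarith [norm_nonneg b, norm_nonneg q]
    have := prod_norm_ge (b * q) q hq hc n
    simpa [mul_assoc] using this
  rw [cc, norm_div]
  calc ‖∏ k ∈ range n, (1 - a * q * q ^ k)‖ / ‖∏ k ∈ range n, (1 - b * q * q ^ k)‖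
      ≤ Real.exp (‖a * q‖ / (1 - ‖q‖)) / Real.exp (-(‖q‖ / ((1 - ‖q‖) * (1 - ‖q‖)))) := by
        apply div_le_div₀ (Real.exp_pos _).le hnum (Real.exp_pos _) hden
    _ = M a q := by
        rw [← Real.exp_sub, M]
        ring_nf

lemma summable_term {b t : ℂ} (a q : ℂ) (hq : ‖q‖ < 1) (hb : ‖b‖ ≤ 1) (ht : ‖t‖ < 1) :
    Summable (fun n : ℕ => cc a b q n * t ^ n) := by
  apply Summable.of_norm_bounded (g := fun n : ℕ => M a q * ‖t‖ ^ n)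
    ((summable_geometric_of_lt_one (norm_nonneg t) ht).mul_left _)
  intro n
  rw [norm_mul, norm_pow]
  exact mul_le_mul_of_nonneg_right (cc_bound a q hq hb n) (by positivity)

lemma F_bound {b s t : ℂ} (a q : ℂ) (hq : ‖q‖ < 1) (hb : ‖b‖ ≤ 1) (ht : ‖t‖ < 1)
    (hst : ‖s‖ ≤ ‖t‖) : ‖F a b q s‖ ≤ M a q / (1 - ‖t‖) := by
  have hs : ‖s‖ < 1 := lt_of_le_of_lt hst ht
  have hsum : Summable (fun n : ℕ => cc a b q n * s ^ n) := summable_term a q hq hb hs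
  have hsumn : Summable (fun n : ℕ => ‖cc a b q n * s ^ n‖) := hsum.norm
  have hg : Summable (fun n : ℕ => M a q * ‖t‖ ^ n) :=
    (summable_geometric_of_lt_one (norm_nonneg t) ht).mul_left _
  calc ‖F a b q s‖ ≤ ∑' n : ℕ, ‖cc a b q n * s ^ n‖ := norm_tsum_le_tsum_norm hsumn
    _ ≤ ∑' n : ℕ, M a q * ‖t‖ ^ n := by
        apply Summable.tsum_le_tsum _ hsumn hg
        intro n
        rw [norm_mul, norm_pow]
        have h1 : ‖cc a b q n‖ * ‖s‖ ^ n ≤ M a q * ‖t‖ ^ n := by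
          apply mul_le_mul (cc_bound a q hq hb n) (pow_le_pow_left₀ (norm_nonneg s) hst n)
            (by positivity) (Real.exp_pos _).le
        exact h1
    _ = M a q * (1 - ‖t‖)⁻¹ := by rw [tsum_mul_left, tsum_geometric_of_lt_one (norm_nonneg t) ht]
    _ = M a q / (1 - ‖t‖) := by rw [div_eq_mul_inv]

lemma cc_succ {a b q : ℂ} (hq : ‖q‖ < 1) (hb : ‖b‖ ≤ 1) (n : ℕ) :
    cc a b q (n + 1) * (1 - b * q * q ^ n) = cc a b q n * (1 - a * q * q ^ n) := by
  have hd := den_prod_ne hq hb n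
  have hdn := den_fac_ne hq hb n
  rw [cc, cc, prod_range_succ, prod_range_succ]
  rw [div_mul_eq_mul_div, div_mul_eq_mul_div, div_eq_div_iff (mul_ne_zero hd hdn) hd]
  ring

lemma recur {b t : ℂ} (a q : ℂ) (hq : ‖q‖ < 1) (hb : ‖b‖ < 1) (ht : ‖t‖ < 1) :
    (1 - t) * F a b q t = (1 - b) + (b - a * t * q) * F a b q (t * q) := by
  set v : ℕ → ℂ := fun n => cc a b q n * t ^ n * (1 - b * q ^ n) with hv
  set w : ℕ → ℂ := fun n =>
    (1 - t) * (cc a b q n * t ^ n) - (b - a * t * q) * (cc a b q n * (t * q) ^ n) with hw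
  have hwv : ∀ n, w n = v n - v (n + 1) := by
    intro n
    have e1 : v (n + 1) = t ^ (n + 1) * (cc a b q (n + 1) * (1 - b * q * q ^ n)) := by
      simp only [hv]
      rw [pow_succ q]
      ring
    rw [hw, e1, cc_succ hq hb.le n]
    simp only [hv]
    rw [mul_pow]
    ring
  have htq : ‖t * q‖ < 1 := by
    rw [norm_mul]
    nlinarith [norm_nonneg t, norm_nonneg q]
  have hsum_t : Summable (fun n : ℕ => cc a b q n * t ^ n) := summable_term a q hq hb.le ht
  have hsum_tq : Summable (fun n : ℕ => cc a b q n * (t * q) ^ n) :=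
    summable_term a q hq hb.le htq
  have hsumw : Summable w := (hsum_t.mul_left (1 - t)).sub (hsum_tq.mul_left (b - a * t * q))
  have htsumw : ∑' n, w n = (1 - t) * F a b q t - (b - a * t * q) * F a b q (t * q) := by
    rw [Summable.tsum_sub (hsum_t.mul_left _) (hsum_tq.mul_left _), tsum_mul_left, tsum_mul_left]
    rfl
  have hvlim : Tendsto v atTop (nhds 0) := by
    rw [tendsto_zero_iff_norm_tendsto_zero]
    apply squeeze_zero (fun n => norm_nonneg _) (g := fun n => (M a q * 2) * ‖t‖ ^ n)
    · intro n
      have hpow : ‖q‖ ^ n ≤ 1 := pow_le_one₀ (norm_nonneg q) hq.le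
      have h1 : ‖1 - b * q ^ n‖ ≤ 2 := by
        calc ‖1 - b * q ^ n‖ ≤ ‖(1:ℂ)‖ + ‖b * q ^ n‖ := norm_sub_le _ _
          _ ≤ 2 := by
            rw [norm_one, norm_mul, norm_pow]
            nlinarith [norm_nonneg b]
      simp only [hv]
      rw [norm_mul, norm_mul, norm_pow]
      calc ‖cc a b q n‖ * ‖t‖ ^ n * ‖1 - b * q ^ n‖ ≤ M a q * ‖t‖ ^ n * 2 := by
            apply mul_le_mul _ h1 (norm_nonneg _)
              (mul_nonneg (Real.exp_pos _).le (by positivity))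
            exact mul_le_mul_of_nonneg_right (cc_bound a q hq hb.le n) (by positivity)
        _ = M a q * 2 * ‖t‖ ^ n := by ring
    · have := tendsto_pow_atTop_nhds_zero_of_lt_one (norm_nonneg t) ht
      simpa using this.const_mul (M a q * 2)
  have hpartial : Tendsto (fun N => ∑ i ∈ range N, w i) atTop (nhds (v 0 - 0)) := by
    have heq : ∀ N, ∑ i ∈ range N, w i = v 0 - v N := by
      intro N
      rw [← Finset.sum_range_sub' v N]
      exact Finset.sum_congr rfl (fun i _ => hwv i)
    exact (tendsto_const_nhds.sub hvlim).congr (fun N => (heq N).symm)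
  have huniq : ∑' n, w n = v 0 - 0 :=
    tendsto_nhds_unique hsumw.hasSum.tendsto_sum_nat hpartial
  have hv0 : v 0 = 1 - b := by simp [hv, cc]
  rw [htsumw] at huniq
  rw [hv0] at huniq
  linear_combination huniq


lemma recur' {b : ℂ} (a q : ℂ) (hq : ‖q‖ < 1) (hb : ‖b‖ < 1) {s : ℂ} (hs : ‖s‖ < 1) :
    F a b q s = (1 - b) / (1 - s) + ((b - a * s * q) / (1 - s)) * F a b q (s * q) := by
  have h1s : (1 : ℂ) - s ≠ 0 := one_sub_ne hs
  have h := recur a q hq hb hs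
  field_simp
  linear_combination h

lemma Pp_succ (a b q t : ℂ) (N : ℕ) :
    Pp a b q t (N + 1) = Pp a b q t N * ((b - a * t * q * q ^ N) / (1 - t * q ^ N)) :=
  prod_range_succ _ _

lemma norm_tqN_le {q t : ℂ} (hq : ‖q‖ < 1) (N : ℕ) : ‖t * q ^ N‖ ≤ ‖t‖ := by
  rw [norm_mul, norm_pow]
  have hpow : ‖q‖ ^ N ≤ 1 := pow_le_one₀ (norm_nonneg q) hq.le
  nlinarith [norm_nonneg t]

lemma iterate_eq {b t : ℂ} (a q : ℂ) (hq : ‖q‖ < 1) (hb : ‖b‖ < 1) (ht : ‖t‖ < 1) (N : ℕ) :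
    F a b q t = (∑ n ∈ range N, (1 - b) / (1 - t * q ^ n) * Pp a b q t n)
      + Pp a b q t N * F a b q (t * q ^ N) := by
  induction N with
  | zero => simp [Pp]
  | succ N ih =>
    have hsN : ‖t * q ^ N‖ < 1 := lt_of_le_of_lt (norm_tqN_le hq N) ht
    have hr := recur' a q hq hb hsN
    have harg : t * q ^ N * q = t * q ^ (N + 1) := by rw [pow_succ]; ring
    have harg2 : b - a * (t * q ^ N) * q = b - a * t * q * q ^ N := by ring
    rw [harg, harg2] at hr
    rw [ih, hr, Finset.sum_range_succ, Pp_succ]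
    ring

section Limits

variable {a b q t : ℂ}

lemma norm_B_le (a : ℂ) (hq : ‖q‖ < 1) (ht : ‖t‖ < 1) (k : ℕ) :
    ‖(b - a * t * q * q ^ k) / (1 - t * q ^ k)‖
      ≤ (‖b‖ + ‖a * t * q‖ * ‖q‖ ^ k) / (1 - ‖t‖ * ‖q‖ ^ k) := by
  have hpow : ‖q‖ ^ k ≤ 1 := pow_le_one₀ (norm_nonneg q) hq.le
  have hden0 : (0:ℝ) < 1 - ‖t‖ * ‖q‖ ^ k := by nlinarith [norm_nonneg t]
  have hnum : ‖b - a * t * q * q ^ k‖ ≤ ‖b‖ + ‖a * t * q‖ * ‖q‖ ^ k := by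
    calc ‖b - a * t * q * q ^ k‖ ≤ ‖b‖ + ‖a * t * q * q ^ k‖ := norm_sub_le _ _
      _ = ‖b‖ + ‖a * t * q‖ * ‖q‖ ^ k := by rw [norm_mul, norm_pow]
  have hden : 1 - ‖t‖ * ‖q‖ ^ k ≤ ‖1 - t * q ^ k‖ := by
    have h2 := norm_sub_norm_le (1 : ℂ) (t * q ^ k)
    simp only [norm_one, norm_mul, norm_pow] at h2
    linarith
  rw [norm_div]
  exact div_le_div₀ (by positivity) hnum hden0 hden

lemma exists_rho (hq : ‖q‖ < 1) (ht : ‖t‖ < 1) (hb : ‖b‖ < 1) (a : ℂ) :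
    ∃ K : ℕ, ∀ k, K ≤ k →
      ‖(b - a * t * q * q ^ k) / (1 - t * q ^ k)‖ ≤ (1 + ‖b‖) / 2 := by
  set ρ : ℝ := (1 + ‖b‖) / 2 with hρ
  have hbρ : ‖b‖ < ρ := by rw [hρ]; linarith
  have hq0 : Tendsto (fun k : ℕ => ‖q‖ ^ k) atTop (nhds 0) :=
    tendsto_pow_atTop_nhds_zero_of_lt_one (norm_nonneg q) hq
  have hgt : Tendsto (fun k : ℕ => (‖b‖ + ‖a * t * q‖ * ‖q‖ ^ k) / (1 - ‖t‖ * ‖q‖ ^ k))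
      atTop (nhds ‖b‖) := by
    have hnum : Tendsto (fun k : ℕ => ‖b‖ + ‖a * t * q‖ * ‖q‖ ^ k) atTop (nhds (‖b‖ + ‖a * t * q‖ * 0)) :=
      tendsto_const_nhds.add (hq0.const_mul _)
    have hden : Tendsto (fun k : ℕ => 1 - ‖t‖ * ‖q‖ ^ k) atTop (nhds (1 - ‖t‖ * 0)) :=
      tendsto_const_nhds.sub (hq0.const_mul _)
    have := hnum.div hden (by norm_num)
    simpa [Pi.div_def] using this
  have hev : ∀ᶠ k in atTop, (‖b‖ + ‖a * t * q‖ * ‖q‖ ^ k) / (1 - ‖t‖ * ‖q‖ ^ k) < ρ :=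
    hgt.eventually_lt_const hbρ
  obtain ⟨K, hK⟩ := eventually_atTop.1 hev
  exact ⟨K, fun k hk => le_trans (norm_B_le a hq ht k) (hK k hk).le⟩

lemma Pp_decay (hq : ‖q‖ < 1) (ht : ‖t‖ < 1) (hb : ‖b‖ < 1) (a : ℂ) :
    ∃ C : ℝ, 0 ≤ C ∧ ∃ K : ℕ, ∀ N, K ≤ N → ‖Pp a b q t N‖ ≤ C * ((1 + ‖b‖) / 2) ^ N := by
  obtain ⟨K, hK⟩ := exists_rho hq ht hb a
  set ρ : ℝ := (1 + ‖b‖) / 2 with hρ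
  have hρ0 : 0 < ρ := by rw [hρ]; positivity
  refine ⟨‖Pp a b q t K‖ / ρ ^ K, by positivity, K, fun N hN => ?_⟩
  obtain ⟨m, rfl⟩ := Nat.exists_eq_add_of_le hN
  have key : ∀ m : ℕ, ‖Pp a b q t (K + m)‖ ≤ ‖Pp a b q t K‖ * ρ ^ m := by
    intro m
    induction m with
    | zero => simp
    | succ m ihm =>
      have : Pp a b q t (K + (m + 1)) = Pp a b q t (K + m)
          * ((b - a * t * q * q ^ (K + m)) / (1 - t * q ^ (K + m))) := by
        exact Pp_succ a b q t (K + m)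
      rw [this, norm_mul]
      calc ‖Pp a b q t (K + m)‖ * ‖(b - a * t * q * q ^ (K + m)) / (1 - t * q ^ (K + m))‖
          ≤ (‖Pp a b q t K‖ * ρ ^ m) * ρ := by
            apply mul_le_mul ihm (hK _ (Nat.le_add_right K m)) (norm_nonneg _)
              (by positivity)
        _ = ‖Pp a b q t K‖ * ρ ^ (m + 1) := by rw [pow_succ]; ring
  calc ‖Pp a b q t (K + m)‖ ≤ ‖Pp a b q t K‖ * ρ ^ m := key m
    _ = ‖Pp a b q t K‖ / ρ ^ K * ρ ^ (K + m) := by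
        rw [pow_add]
        field_simp

lemma Pp_tendsto (hq : ‖q‖ < 1) (ht : ‖t‖ < 1) (hb : ‖b‖ < 1) (a : ℂ) :
    Tendsto (fun N => Pp a b q t N) atTop (nhds 0) := by
  obtain ⟨C, hC0, K, hK⟩ := Pp_decay hq ht hb a
  set ρ : ℝ := (1 + ‖b‖) / 2 with hρ
  have hρ0 : 0 ≤ ρ := by rw [hρ]; positivity
  have hρ1 : ρ < 1 := by rw [hρ]; linarith
  rw [tendsto_zero_iff_norm_tendsto_zero]
  apply squeeze_zero' (Eventually.of_forall fun n => norm_nonneg _)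
  · exact eventually_atTop.2 ⟨K, hK⟩
  · have := (tendsto_pow_atTop_nhds_zero_of_lt_one hρ0 hρ1).const_mul C
    simpa using this


lemma summable_term2 (hq : ‖q‖ < 1) (ht : ‖t‖ < 1) (hb : ‖b‖ < 1) (a : ℂ) :
    Summable (fun n : ℕ => (1 - b) / (1 - t * q ^ n) * Pp a b q t n) := by
  obtain ⟨C, hC0, K, hK⟩ := Pp_decay hq ht hb a
  set ρ : ℝ := (1 + ‖b‖) / 2 with hρ
  have hρ0 : 0 ≤ ρ := by rw [hρ]; positivity
  have hρ1 : ρ < 1 := by rw [hρ]; linarith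
  have ht0 : (0:ℝ) < 1 - ‖t‖ := by linarith
  apply Summable.of_norm_bounded_eventually (g := fun n : ℕ => (‖1 - b‖ / (1 - ‖t‖) * C) * ρ ^ n)
    ((summable_geometric_of_lt_one hρ0 hρ1).mul_left _)
  rw [Nat.cofinite_eq_atTop]
  filter_upwards [eventually_ge_atTop K] with n hn
  have hden : 1 - ‖t‖ ≤ ‖1 - t * q ^ n‖ := by
    have h2 := norm_sub_norm_le (1 : ℂ) (t * q ^ n)
    have h3 := norm_tqN_le (t := t) hq n
    simp only [norm_one] at h2
    linarith
  have hdiv : ‖1 - b‖ / ‖1 - t * q ^ n‖ ≤ ‖1 - b‖ / (1 - ‖t‖) := by gcongr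
  calc ‖(1 - b) / (1 - t * q ^ n) * Pp a b q t n‖
      = ‖1 - b‖ / ‖1 - t * q ^ n‖ * ‖Pp a b q t n‖ := by rw [norm_mul, norm_div]
    _ ≤ ‖1 - b‖ / (1 - ‖t‖) * (C * ρ ^ n) :=
        mul_le_mul hdiv (hK n hn) (norm_nonneg _) (by positivity)
    _ = ‖1 - b‖ / (1 - ‖t‖) * C * ρ ^ n := by ring

lemma main_eq (a : ℂ) (hq : ‖q‖ < 1) (ht : ‖t‖ < 1) (hb : ‖b‖ < 1) :
    F a b q t = ∑' n : ℕ, (1 - b) / (1 - t * q ^ n) * Pp a b q t n := by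
  have ht0 : (0:ℝ) < 1 - ‖t‖ := by linarith
  have hrem : Tendsto (fun N => Pp a b q t N * F a b q (t * q ^ N)) atTop (nhds 0) := by
    rw [tendsto_zero_iff_norm_tendsto_zero]
    apply squeeze_zero (fun n => norm_nonneg _)
      (g := fun N => ‖Pp a b q t N‖ * (M a q / (1 - ‖t‖)))
    · intro N
      rw [norm_mul]
      exact mul_le_mul_of_nonneg_left
        (F_bound a q hq hb.le ht (norm_tqN_le hq N)) (norm_nonneg _)
    · have h1 : Tendsto (fun N => ‖Pp a b q t N‖) atTop (nhds 0) := by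
        simpa using (Pp_tendsto hq ht hb a).norm
      simpa using h1.mul_const (M a q / (1 - ‖t‖))
  have hsum2 := summable_term2 hq ht hb a
  have h1 : Tendsto
      (fun N => (∑ n ∈ range N, (1 - b) / (1 - t * q ^ n) * Pp a b q t n)
        + Pp a b q t N * F a b q (t * q ^ N)) atTop
      (nhds ((∑' n : ℕ, (1 - b) / (1 - t * q ^ n) * Pp a b q t n) + 0)) :=
    hsum2.hasSum.tendsto_sum_nat.add hrem
  have h2 : Tendsto (fun _ : ℕ => F a b q t) atTop
      (nhds ((∑' n : ℕ, (1 - b) / (1 - t * q ^ n) * Pp a b q t n) + 0)) :=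
    h1.congr (fun N => (iterate_eq a q hq hb ht N).symm)
  have := tendsto_nhds_unique h2 tendsto_const_nhds
  rw [← this, add_zero]

lemma term_eq (a : ℂ) (hq : ‖q‖ < 1) (ht : ‖t‖ < 1) (hb0 : b ≠ 0) (n : ℕ) :
    (1 - b) / (1 - t * q ^ n) * Pp a b q t n
      = (1 - b) / (1 - t) * ((∏ k ∈ range n, (1 - a * t * q / b * q ^ k))
          / (∏ k ∈ range n, (1 - t * q * q ^ k)) * b ^ n) := by
  have hnum : ∏ k ∈ range n, (b - a * t * q * q ^ k)
      = b ^ n * ∏ k ∈ range n, (1 - a * t * q / b * q ^ k) := by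
    have h1 : b ^ n * ∏ k ∈ range n, (1 - a * t * q / b * q ^ k)
        = ∏ k ∈ range n, (b * (1 - a * t * q / b * q ^ k)) := by
      rw [Finset.prod_mul_distrib, Finset.prod_const, card_range]
    rw [h1]
    apply Finset.prod_congr rfl
    intro k _
    field_simp
  have hden : (1 - t * q ^ n) * ∏ k ∈ range n, (1 - t * q ^ k)
      = (1 - t) * ∏ k ∈ range n, (1 - t * q * q ^ k) := by
    have h1 : (∏ k ∈ range n, (1 - t * q ^ k)) * (1 - t * q ^ n)
        = ∏ k ∈ range (n + 1), (1 - t * q ^ k) := (prod_range_succ _ n).symm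
    have h2 : ∏ k ∈ range (n + 1), (1 - t * q ^ k)
        = (∏ k ∈ range n, (1 - t * q ^ (k + 1))) * (1 - t * q ^ 0) :=
      prod_range_succ' _ n
    have h3 : ∏ k ∈ range n, (1 - t * q ^ (k + 1)) = ∏ k ∈ range n, (1 - t * q * q ^ k) := by
      apply Finset.prod_congr rfl
      intro k _
      rw [pow_succ]
      ring
    calc (1 - t * q ^ n) * ∏ k ∈ range n, (1 - t * q ^ k)
        = ∏ k ∈ range (n + 1), (1 - t * q ^ k) := by rw [← h1]; ring
      _ = (1 - t) * ∏ k ∈ range n, (1 - t * q * q ^ k) := by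
          rw [h2, h3, pow_zero, mul_one]
          ring
  have hPp : Pp a b q t n = (∏ k ∈ range n, (b - a * t * q * q ^ k))
      / (∏ k ∈ range n, (1 - t * q ^ k)) := Finset.prod_div_distrib _ _
  have hd3 : (∏ k ∈ range n, (1 - t * q * q ^ k)) ≠ 0 := den_prod_ne hq ht.le n
  have hd4 : (1 : ℂ) - t ≠ 0 := one_sub_ne ht
  rw [hPp, hnum, div_mul_div_comm, hden]
  field_simp

end Limits

end FineAux

open FineAux in
/-- Fine's transformation
`Σ_{n≥0} ((aq;q)_n/(bq;q)_n) t^n = ((1-b)/(1-t)) Σ_{n≥0} ((atq/b;q)_n/(tq;q)_n) b^n`,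
as an identity of analytic functions for `|q|, |t|, |b| < 1`, `b ≠ 0`. -/
theorem fine_transformation (aa b q t : ℂ) (hq : ‖q‖ < 1) (ht : ‖t‖ < 1) (hb : ‖b‖ < 1)
    (hb0 : b ≠ 0) :
    ∑' n : ℕ, (∏ k ∈ range n, (1 - aa * q * q ^ k)) / (∏ k ∈ range n, (1 - b * q * q ^ k))
        * t ^ n
      = (1 - b) / (1 - t)
        * ∑' n : ℕ, (∏ k ∈ range n, (1 - aa * t * q / b * q ^ k))
            / (∏ k ∈ range n, (1 - t * q * q ^ k)) * b ^ n := by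
  have h0 : F aa b q t = ∑' n : ℕ,
      (∏ k ∈ range n, (1 - aa * q * q ^ k)) / (∏ k ∈ range n, (1 - b * q * q ^ k)) * t ^ n := by
    simp only [F, cc]
  rw [← h0, main_eq aa hq ht hb]
  calc ∑' n : ℕ, (1 - b) / (1 - t * q ^ n) * Pp aa b q t n
      = ∑' n : ℕ, (1 - b) / (1 - t) * ((∏ k ∈ range n, (1 - aa * t * q / b * q ^ k))
          / (∏ k ∈ range n, (1 - t * q * q ^ k)) * b ^ n) :=
        tsum_congr (fun n => term_eq aa hq ht hb0 n)
    _ = (1 - b) / (1 - t) * ∑' n : ℕ, (∏ k ∈ range n, (1 - aa * t * q / b * q ^ k))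
          / (∏ k ∈ range n, (1 - t * q * q ^ k)) * b ^ n := tsum_mul_left
end

section
/- As formal power series in q: Σ_{n≥0} ( 1/(q;q)_∞ − 1/(q;q)_n ) = (1/(q;q)_∞) Σ_{n≥1} q^n/(1−q^n). -/
open PowerSeries Finset

noncomputable instance inst_s17 : T2Space (PowerSeries ℚ) :=
  inferInstanceAs (T2Space ((Unit →₀ ℕ) → ℚ))

namespace SOT

local notation "R" => PowerSeries ℚ

lemma coeff_mv (σ : Unit →₀ ℕ) (F : R) :
    MvPowerSeries.coeff σ F = PowerSeries.coeff (σ ()) F := by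
  have h : σ = Finsupp.single () (σ ()) := Finsupp.unique_single σ
  rw [PowerSeries.coeff, ← h]

/-- helper: extract coefficient equality from divisibility. -/
lemma coeff_eq_of_dvd {F G : R} {d : ℕ} (h : (X : R) ^ (d + 1) ∣ F - G) :
    coeff d F = coeff d G := by
  have := (X_pow_dvd_iff.mp h) d (Nat.lt_succ_self d)
  rw [map_sub] at this
  linarith

/-- the sum of a coefficient-wise finitely supported family. -/
noncomputable def sumF (f : ℕ → R) : R :=
  PowerSeries.mk fun d => ∑ m ∈ range (d + 1), coeff d (f m)

lemma coeff_term_zero {f : ℕ → R} (hf : ∀ m, (X : R) ^ m ∣ f m) {d m : ℕ} (h : d < m) :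
    coeff d (f m) = 0 :=
  (X_pow_dvd_iff.mp (hf m)) d h

lemma coeff_sumF {f : ℕ → R} (hf : ∀ m, (X : R) ^ m ∣ f m) {e D : ℕ} (h : e < D) :
    coeff e (sumF f) = ∑ m ∈ range D, coeff e (f m) := by
  rw [sumF, coeff_mk]
  apply Finset.sum_subset (range_subset_range.mpr h)
  intro m _ hnm
  rw [mem_range, not_lt] at hnm
  exact coeff_term_zero hf (lt_of_lt_of_le (Nat.lt_succ_self e) hnm)

lemma hasSum_sumF {f : ℕ → R} (hf : ∀ m, (X : R) ^ m ∣ f m) : HasSum f (sumF f) := by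
  rw [HasSum]
  apply tendsto_pi_nhds.mpr
  intro σ
  apply Filter.Tendsto.congr' _ (tendsto_const_nhds (x := MvPowerSeries.coeff σ (sumF f)))
  filter_upwards [Filter.eventually_ge_atTop (range (σ () + 1))] with s hs
  show MvPowerSeries.coeff σ (sumF f) = MvPowerSeries.coeff σ (∑ b ∈ s, f b)
  rw [coeff_mv, coeff_mv, map_sum (coeff (σ ())) f s]
  rw [coeff_sumF hf (Nat.lt_succ_self (σ ()))]
  refine Finset.sum_subset hs ?_
  intro m _ hnm
  rw [mem_range, not_lt] at hnm
  exact coeff_term_zero hf (lt_of_lt_of_le (Nat.lt_succ_self _) hnm)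

lemma sumF_add {f g : ℕ → R} :
    sumF (fun m => f m + g m) = sumF f + sumF g := by
  ext d
  simp [sumF, coeff_mk, Finset.sum_add_distrib]

lemma sumF_mul_left {f : ℕ → R} (hf : ∀ m, (X : R) ^ m ∣ f m) (a : R) :
    sumF (fun m => a * f m) = a * sumF f := by
  ext d
  rw [PowerSeries.coeff_mul, sumF, coeff_mk]
  have : ∀ p ∈ antidiagonal d, coeff p.1 a * coeff p.2 (sumF f)
      = ∑ m ∈ range (d + 1), coeff p.1 a * coeff p.2 (f m) := by
    intro p hp
    rw [HasAntidiagonal.mem_antidiagonal] at hp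
    rw [coeff_sumF hf (show p.2 < d + 1 by omega), Finset.mul_sum]
  rw [Finset.sum_congr rfl this, Finset.sum_comm]
  apply Finset.sum_congr rfl
  intro m _
  rw [PowerSeries.coeff_mul]

lemma sumF_succ {f : ℕ → R} (hf : ∀ m, (X : R) ^ (m + 1) ∣ f (m + 1)) :
    sumF f = f 0 + sumF (fun m => f (m + 1)) := by
  ext d
  rw [map_add, sumF, sumF, coeff_mk, coeff_mk, Finset.sum_range_succ' _ d,
    Finset.sum_range_succ]
  have h0 : coeff d (f (d + 1)) = 0 := (X_pow_dvd_iff.mp (hf d)) d (Nat.lt_succ_self d)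
  rw [h0]
  ring

lemma X_pow_dvd_sumF {f : ℕ → R} (hf : ∀ m, (X : R) ^ m ∣ f m) {n : ℕ}
    (h0 : ∀ m < n, f m = 0) : (X : R) ^ n ∣ sumF f := by
  rw [X_pow_dvd_iff]
  intro e he
  rw [sumF, coeff_mk]
  apply Finset.sum_eq_zero
  intro m _
  rcases lt_or_ge m n with h | h
  · rw [h0 m h, map_zero]
  · exact coeff_term_zero hf (lt_of_lt_of_le he h)

lemma sumF_sub_partial {f : ℕ → R} (hf : ∀ m, (X : R) ^ m ∣ f m) (n : ℕ) :
    sumF f - ∑ m ∈ range n, f m = sumF (fun m => if m < n then 0 else f m) := by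
  ext d
  have hf' : ∀ m, (X : R) ^ m ∣ (if m < n then 0 else f m) := by
    intro m
    split <;> simp [hf m]
  set D := max (d + 1) n with hD
  rw [map_sub, coeff_sumF hf (show d < D by omega), coeff_sumF hf' (show d < D by omega),
    map_sum]
  have hfilter : (range D).filter (· < n) = range n := by
    ext m
    simp only [mem_filter, mem_range]
    omega
  have : ∑ m ∈ range n, coeff d (f m)
      = ∑ m ∈ range D, (if m < n then coeff d (f m) else 0) := by
    rw [← Finset.sum_filter, hfilter]
  rw [this, ← Finset.sum_sub_distrib]
  apply Finset.sum_congr rfl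
  intro m _
  by_cases h : m < n <;> simp [h]

/-! ### The algebraic objects -/

noncomputable def p (n : ℕ) : R := ∏ k ∈ range n, (1 - X ^ (k + 1))

noncomputable def u (n : ℕ) : R := (p n)⁻¹

noncomputable def v (t : ℕ) : R := (1 - X ^ t)⁻¹

lemma constCoeff_one_sub (k : ℕ) : constantCoeff (1 - X ^ (k + 1) : R) = 1 := by
  simp

lemma constCoeff_p (n : ℕ) : constantCoeff (p n) = 1 := by
  rw [p, map_prod]
  simp

lemma p_mul_u (n : ℕ) : p n * u n = 1 :=
  PowerSeries.mul_inv_cancel _ (by rw [constCoeff_p]; exact one_ne_zero)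

lemma p_zero : p 0 = 1 := by simp [p]

lemma u_zero : u 0 = 1 := by
  rw [u, p_zero]
  rw [PowerSeries.inv_eq_iff_mul_eq_one (by simp)]
  simp

lemma p_succ (n : ℕ) : p (n + 1) = p n * (1 - X ^ (n + 1)) := Finset.prod_range_succ _ _

lemma one_sub_mul_v (t : ℕ) : (1 - X ^ (t + 1) : R) * v (t + 1) = 1 :=
  PowerSeries.mul_inv_cancel _ (by rw [constCoeff_one_sub]; exact one_ne_zero)

lemma u_rec (m : ℕ) : u m = (1 - X ^ (m + 1)) * u (m + 1) := by
  have h1 : p m * ((1 - X ^ (m + 1)) * u (m + 1)) = 1 := by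
    rw [← mul_assoc, ← p_succ, p_mul_u]
  calc u m = u m * (p m * ((1 - X ^ (m + 1)) * u (m + 1))) := by rw [h1, mul_one]
    _ = (u m * p m) * ((1 - X ^ (m + 1)) * u (m + 1)) := by ring
    _ = (1 - X ^ (m + 1)) * u (m + 1) := by rw [mul_comm (u m), p_mul_u, one_mul]

noncomputable def term (j m : ℕ) : R := X ^ (m * (j + 1)) * u m

noncomputable def A (j : ℕ) : R := sumF (term j)

noncomputable def B (j : ℕ) : R := sumF (fun m => (m : ℚ) • term j m)

lemma term_dvd (j m : ℕ) : (X : R) ^ m ∣ term j m :=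
  dvd_mul_of_dvd_left (pow_dvd_pow X (Nat.le_mul_of_pos_right m (Nat.succ_pos j))) _

lemma bterm_dvd (j m : ℕ) : (X : R) ^ m ∣ (m : ℚ) • term j m := by
  rw [smul_eq_C_mul]
  exact Dvd.dvd.mul_left (term_dvd j m) _

lemma term_zero (j : ℕ) : term j 0 = 1 := by
  simp [term, u_zero]

lemma coeff_term_diag {d m : ℕ} (hm : m ≠ 0) (j : ℕ) (hj : d ≤ j) :
    coeff d (term j m) = 0 := by
  have h1 : 1 ≤ m := Nat.one_le_iff_ne_zero.mpr hm
  have h2 : d + 1 ≤ m * (j + 1) := by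
    calc d + 1 ≤ j + 1 := by omega
      _ ≤ m * (j + 1) := Nat.le_mul_of_pos_left _ h1
  exact (X_pow_dvd_iff.mp (dvd_mul_of_dvd_left (pow_dvd_pow (X : R) h2) (u m))) d
    (Nat.lt_succ_self d)

lemma term_succ (j m : ℕ) :
    term j (m + 1) = term (j + 1) (m + 1) + X ^ (j + 1) * term j m := by
  have e1 : (m + 1) * (j + 1) = j + 1 + m * (j + 1) := by ring
  have e2 : (m + 1) * (j + 2) = (m + 1) * (j + 1) + (m + 1) := by ring
  rw [term, term, term, u_rec m, e2, e1, pow_add, pow_add, pow_add]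
  ring

lemma FE_a (j : ℕ) : A (j + 1) = A j - X ^ (j + 1) * A j := by
  have h1 : A j = 1 + sumF (fun m => term j (m + 1)) := by
    rw [A, sumF_succ (fun m => term_dvd j (m + 1)), term_zero]
  have h2 : A (j + 1) = 1 + sumF (fun m => term (j + 1) (m + 1)) := by
    rw [A, sumF_succ (fun m => term_dvd (j + 1) (m + 1)), term_zero]
  have h3 : sumF (fun m => term j (m + 1))
      = sumF (fun m => term (j + 1) (m + 1)) + X ^ (j + 1) * A j := by
    calc sumF (fun m => term j (m + 1))
        = sumF (fun m => term (j + 1) (m + 1) + X ^ (j + 1) * term j m) := by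
          apply congrArg; funext m; exact term_succ j m
      _ = sumF (fun m => term (j + 1) (m + 1)) + sumF (fun m => X ^ (j + 1) * term j m) :=
          sumF_add
      _ = sumF (fun m => term (j + 1) (m + 1)) + X ^ (j + 1) * A j := by
          rw [sumF_mul_left (term_dvd j), A]
  linear_combination h2 - h1 - h3

lemma A_eq (j : ℕ) : A j = p j * A 0 := by
  induction j with
  | zero => rw [p_zero, one_mul]
  | succ j ih =>
      rw [FE_a, ih, p_succ]
      ring

lemma coeff_A_diag (d : ℕ) : coeff d (A d) = coeff d (1 : R) := by
  rw [A, sumF, coeff_mk]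
  rw [Finset.sum_eq_single_of_mem 0 (mem_range.mpr (Nat.succ_pos d))]
  · rw [term_zero]
  · intro m _ hm0
    exact coeff_term_diag hm0 d le_rfl

/-! ### The infinite product -/

noncomputable def PP : R := PowerSeries.mk fun d => coeff d (p d)

lemma p_stab {e d m : ℕ} (hdm : d ≤ m) (hed : e ≤ d) :
    coeff e (p m) = coeff e (p d) := by
  induction m, hdm using Nat.le_induction with
  | base => rfl
  | succ m hdm ih =>
      rw [← ih]
      apply coeff_eq_of_dvd
      rw [p_succ]
      have h : p m * (1 - X ^ (m + 1)) - p m = -(p m * X ^ (m + 1)) := by ring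
      rw [h]
      exact dvd_neg.mpr (Dvd.dvd.mul_left (pow_dvd_pow X (by omega)) _)

lemma coeff_PP (d : ℕ) : coeff d PP = coeff d (p d) := by
  rw [PP, coeff_mk]

lemma PP_sub_p_dvd {d n : ℕ} (h : d ≤ n) : (X : R) ^ (d + 1) ∣ PP - p n := by
  rw [X_pow_dvd_iff]
  intro e he
  rw [map_sub, coeff_PP, sub_eq_zero]
  exact (p_stab (show e ≤ n by omega) le_rfl).symm

lemma one_sub_prod_dvd {n : ℕ} {s : Finset ℕ} {f : ℕ → R}
    (h : ∀ k ∈ s, (X : R) ^ n ∣ 1 - f k) : (X : R) ^ n ∣ 1 - ∏ k ∈ s, f k := by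
  induction s using Finset.cons_induction with
  | empty => simp
  | cons a s ha ih =>
      rw [Finset.prod_cons]
      have h1 : (X : R) ^ n ∣ 1 - f a := h a (Finset.mem_cons_self a s)
      have h2 : (X : R) ^ n ∣ 1 - ∏ k ∈ s, f k := ih fun k hk => h k (Finset.mem_cons_of_mem hk)
      have e1 : 1 - f a * ∏ k ∈ s, f k
          = (1 - f a) + f a * (1 - ∏ k ∈ s, f k) := by ring
      rw [e1]
      exact dvd_add h1 (Dvd.dvd.mul_left h2 _)

lemma hasProd_PP : HasProd (fun k => (1 - X * X ^ k : R)) PP := by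
  rw [HasProd]
  apply tendsto_pi_nhds.mpr
  intro σ
  apply Filter.Tendsto.congr' _ (tendsto_const_nhds (x := MvPowerSeries.coeff σ PP))
  filter_upwards [Filter.eventually_ge_atTop (range (σ () + 1))] with s hs
  show MvPowerSeries.coeff σ PP = MvPowerSeries.coeff σ (∏ k ∈ s, (1 - X * X ^ k : R))
  rw [coeff_mv, coeff_mv]
  set e := σ () with he
  have hprod : ∀ k ∈ s, (1 - X * X ^ k : R) = 1 - X ^ (k + 1) := by
    intro k _
    rw [← pow_succ']
  rw [Finset.prod_congr rfl hprod]
  have split : ∏ k ∈ s, (1 - X ^ (k + 1) : R)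
      = p (e + 1) * ∏ k ∈ s \ range (e + 1), (1 - X ^ (k + 1) : R) := by
    rw [p, ← Finset.prod_sdiff hs, mul_comm]
  rw [split]
  apply coeff_eq_of_dvd
  have h2 : (X : R) ^ (e + 1) ∣ 1 - ∏ k ∈ s \ range (e + 1), (1 - X ^ (k + 1) : R) := by
    apply one_sub_prod_dvd
    intro k hk
    rw [Finset.mem_sdiff, mem_range, not_lt] at hk
    have e1 : (1 : R) - (1 - X ^ (k + 1)) = X ^ (k + 1) := by ring
    rw [e1]
    exact pow_dvd_pow X (by omega)
  have e2 : PP - p (e + 1) * ∏ k ∈ s \ range (e + 1), (1 - X ^ (k + 1) : R)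
      = (PP - p (e + 1)) + p (e + 1) * (1 - ∏ k ∈ s \ range (e + 1), (1 - X ^ (k + 1) : R)) := by
    ring
  rw [e2]
  exact dvd_add (PP_sub_p_dvd (by omega)) (Dvd.dvd.mul_left h2 _)

lemma constCoeff_PP : constantCoeff PP = 1 := by
  have : coeff 0 PP = coeff 0 (p 0) := coeff_PP 0
  rw [p_zero] at this
  simpa using this

lemma euler : PP * A 0 = 1 := by
  ext d
  have h1 : coeff d (PP * A 0) = coeff d (p d * A 0) := by
    apply coeff_eq_of_dvd
    have : PP * A 0 - p d * A 0 = (PP - p d) * A 0 := by ring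
    rw [this]
    exact Dvd.dvd.mul_right (PP_sub_p_dvd le_rfl) _
  rw [h1, ← A_eq, coeff_A_diag]

lemma A0_eq : A 0 = PP⁻¹ := by
  rw [eq_comm, PowerSeries.inv_eq_iff_mul_eq_one (by rw [constCoeff_PP]; exact one_ne_zero)]
  rw [mul_comm]
  exact euler

/-! ### The `B` side -/

lemma bterm_succ (j m : ℕ) :
    ((m : ℚ) + 1) • term j (m + 1)
      = ((m : ℚ) + 1) • term (j + 1) (m + 1)
        + X ^ (j + 1) * ((m : ℚ) • term j m) + X ^ (j + 1) * term j m := by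
  rw [term_succ j m]
  rw [smul_add]
  have : ((m : ℚ) + 1) • (X ^ (j + 1) * term j m)
      = X ^ (j + 1) * ((m : ℚ) • term j m) + X ^ (j + 1) * term j m := by
    rw [add_smul, one_smul, mul_smul_comm]
  rw [this]
  ring

lemma FE_b (j : ℕ) :
    B (j + 1) = B j - X ^ (j + 1) * B j - X ^ (j + 1) * A j := by
  have h1 : B j = sumF (fun m => ((m : ℚ) + 1) • term j (m + 1)) := by
    rw [B, sumF_succ (f := fun m => (m : ℚ) • term j m) (fun m => bterm_dvd j (m + 1))]
    simp only [Nat.cast_zero, zero_smul, zero_add, Nat.cast_add, Nat.cast_one]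
  have h2 : B (j + 1) = sumF (fun m => ((m : ℚ) + 1) • term (j + 1) (m + 1)) := by
    rw [B, sumF_succ (f := fun m => (m : ℚ) • term (j + 1) m) (fun m => bterm_dvd (j + 1) (m + 1))]
    simp only [Nat.cast_zero, zero_smul, zero_add, Nat.cast_add, Nat.cast_one]
  have h3 : sumF (fun m => ((m : ℚ) + 1) • term j (m + 1))
      = sumF (fun m => ((m : ℚ) + 1) • term (j + 1) (m + 1))
        + X ^ (j + 1) * B j + X ^ (j + 1) * A j := by
    calc sumF (fun m => ((m : ℚ) + 1) • term j (m + 1))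
        = sumF (fun m => ((m : ℚ) + 1) • term (j + 1) (m + 1)
            + (X ^ (j + 1) * ((m : ℚ) • term j m) + X ^ (j + 1) * term j m)) := by
          apply congrArg; funext m
          rw [bterm_succ j m]; ring
      _ = sumF (fun m => ((m : ℚ) + 1) • term (j + 1) (m + 1))
            + sumF (fun m => X ^ (j + 1) * ((m : ℚ) • term j m) + X ^ (j + 1) * term j m) :=
          sumF_add
      _ = sumF (fun m => ((m : ℚ) + 1) • term (j + 1) (m + 1))
            + (sumF (fun m => X ^ (j + 1) * ((m : ℚ) • term j m))
              + sumF (fun m => X ^ (j + 1) * term j m)) := by rw [sumF_add]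
      _ = _ := by
          rw [sumF_mul_left (bterm_dvd j), sumF_mul_left (term_dvd j), B, A]
          ring
  linear_combination h2 - h1 - h3

noncomputable def S (j : ℕ) : R := ∑ k ∈ range j, X ^ (k + 1) * v (k + 1)

lemma B_eq (j : ℕ) : B j = p j * (B 0 - A 0 * S j) := by
  induction j with
  | zero => rw [p_zero, S]; simp
  | succ j ih =>
      have hS : S (j + 1) = S j + X ^ (j + 1) * v (j + 1) := by
        rw [S, S, Finset.sum_range_succ]
      linear_combination (FE_b j) + (1 - X ^ (j + 1)) * ih - X ^ (j + 1) * (A_eq j)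
        + (A 0 * S (j + 1) - B 0) * (p_succ j)
        + ((1 - X ^ (j + 1)) * p j * A 0) * hS
        + (X ^ (j + 1) * p j * A 0) * (one_sub_mul_v j)
  
lemma coeff_B_diag (d : ℕ) : coeff d (B d) = 0 := by
  rw [B, sumF, coeff_mk]
  apply Finset.sum_eq_zero
  intro m _
  rcases Nat.eq_zero_or_pos m with h | h
  · subst h; simp
  · rw [map_smul, coeff_term_diag (Nat.pos_iff_ne_zero.mp h) d le_rfl, smul_zero]

/-! ### The right-hand sum -/

noncomputable def T : R := sumF (fun n => X ^ (n + 1) * v (n + 1))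

lemma hT_dvd : ∀ n, (X : R) ^ n ∣ X ^ (n + 1) * v (n + 1) := fun n =>
  dvd_mul_of_dvd_left (pow_dvd_pow X (Nat.le_succ n)) _

lemma hasSum_T : HasSum (fun n => (X : R) ^ (n + 1) * v (n + 1)) T := hasSum_sumF hT_dvd

lemma T_sub_S_dvd (d : ℕ) : (X : R) ^ (d + 1) ∣ T - S d := by
  rw [X_pow_dvd_iff]
  intro e he
  rw [map_sub, sub_eq_zero, T, coeff_sumF hT_dvd he, S, map_sum,
    Finset.sum_range_succ]
  have h0 : coeff e ((X : R) ^ (d + 1) * v (d + 1)) = 0 :=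
    (X_pow_dvd_iff.mp (dvd_mul_right _ _)) e he
  rw [h0, add_zero]

lemma final : B 0 = A 0 * T := by
  have key : PP * (B 0 - A 0 * T) = 0 := by
    ext d
    have h1 : coeff d (PP * (B 0 - A 0 * T)) = coeff d (p d * (B 0 - A 0 * S d)) := by
      apply coeff_eq_of_dvd
      have e1 : PP * (B 0 - A 0 * T) - p d * (B 0 - A 0 * S d)
          = (PP - p d) * (B 0 - A 0 * T) - (p d * A 0) * (T - S d) := by ring
      rw [e1]
      exact dvd_sub (Dvd.dvd.mul_right (PP_sub_p_dvd le_rfl) _)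
        (Dvd.dvd.mul_left (T_sub_S_dvd d) _)
    rw [h1, ← B_eq, coeff_B_diag, map_zero]
  have h2 : PP⁻¹ * (PP * (B 0 - A 0 * T)) = PP⁻¹ * 0 := by rw [key]
  rw [← mul_assoc, PowerSeries.inv_mul_cancel _ (by rw [constCoeff_PP]; exact one_ne_zero),
    one_mul, mul_zero, sub_eq_zero] at h2
  exact h2

/-! ### The left-hand sum -/

lemma uT (n : ℕ) : u n = ∑ m ∈ range (n + 1), term 0 m := by
  induction n with
  | zero => simp [term, u_zero]
  | succ n ih =>
      rw [Finset.sum_range_succ, ← ih]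
      have ht : term 0 (n + 1) = X ^ (n + 1) * u (n + 1) := by
        rw [term, Nat.mul_one]
      rw [ht]
      linear_combination -(u_rec n)

lemma tail_eq (n : ℕ) :
    A 0 - u n = sumF (fun m => if m < n + 1 then 0 else term 0 m) := by
  rw [A, uT n]
  exact sumF_sub_partial (term_dvd 0) (n + 1)

lemma dvd_tail (n : ℕ) : (X : R) ^ (n + 1) ∣ A 0 - u n := by
  rw [tail_eq]
  apply X_pow_dvd_sumF
  · intro m
    split <;> simp [term_dvd 0 m]
  · intro m hm
    rw [if_pos hm]

lemma hasSum_L : HasSum (fun n => A 0 - u n) (sumF fun n => A 0 - u n) :=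
  hasSum_sumF fun n => (pow_dvd_pow X (Nat.le_succ n)).trans (dvd_tail n)

lemma L_eq_B0 : sumF (fun n => A 0 - u n) = B 0 := by
  ext d
  have hL : ∀ n, (X : R) ^ n ∣ A 0 - u n :=
    fun n => (pow_dvd_pow X (Nat.le_succ n)).trans (dvd_tail n)
  rw [coeff_sumF hL (Nat.lt_succ_self d), B, sumF, coeff_mk]
  have step1 : ∀ n ∈ range (d + 1), coeff d (A 0 - u n)
      = ∑ m ∈ range (d + 1), (if n < m then coeff d (term 0 m) else 0) := by
    intro n _
    have hg : ∀ m, (X : R) ^ m ∣ (if m < n + 1 then 0 else term 0 m) := by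
      intro m
      split <;> simp [term_dvd 0 m]
    rw [tail_eq n, coeff_sumF hg (Nat.lt_succ_self d)]
    apply Finset.sum_congr rfl
    intro m _
    by_cases h : m < n + 1
    · rw [if_pos h, if_neg (by omega), map_zero]
    · rw [if_neg h, if_pos (by omega)]
  rw [Finset.sum_congr rfl step1, Finset.sum_comm]
  apply Finset.sum_congr rfl
  intro m hm
  rw [mem_range] at hm
  have hfilter : (range (d + 1)).filter (· < m) = range m := by
    ext n
    simp only [mem_filter, mem_range]
    omega
  rw [← Finset.sum_filter, hfilter, Finset.sum_const, Finset.card_range, map_smul,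
    smul_eq_mul, nsmul_eq_mul]

end SOT

open SOT in
theorem sum_of_tails_partitions_aux :
    ∑' n : ℕ, ((pochInf X X)⁻¹ - (poch X X n)⁻¹)
      = (pochInf X X)⁻¹ * ∑' n : ℕ, X ^ (n + 1) * (1 - X ^ (n + 1) : PowerSeries ℚ)⁻¹ := by
  have hpoch : ∀ n, poch X X n = p n := by
    intro n
    rw [poch, p]
    exact Finset.prod_congr rfl fun k _ => by rw [← pow_succ']
  have hpochInf : pochInf X X = PP := by
    rw [pochInf]
    exact hasProd_PP.tprod_eq
  have hL : (∑' n : ℕ, ((pochInf X X)⁻¹ - (poch X X n)⁻¹)) = B 0 := by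
    have : (fun n : ℕ => (pochInf X X)⁻¹ - (poch X X n)⁻¹) = fun n => A 0 - u n := by
      funext n
      rw [hpochInf, hpoch, ← A0_eq, u]
    rw [this, hasSum_L.tsum_eq, L_eq_B0]
  have hR : (∑' n : ℕ, (X : PowerSeries ℚ) ^ (n + 1) * (1 - X ^ (n + 1))⁻¹) = T := by
    have : (fun n : ℕ => (X : PowerSeries ℚ) ^ (n + 1) * (1 - X ^ (n + 1))⁻¹)
        = fun n => X ^ (n + 1) * v (n + 1) := by
      funext n
      rw [v]
    rw [this, hasSum_T.tsum_eq]
  rw [hL, hR, hpochInf, ← A0_eq]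
  exact final

/-- sums of tails for the partition generating function. -/
theorem sum_of_tails_partitions :
    ∑' n : ℕ, ((pochInf X X)⁻¹ - (poch X X n)⁻¹)
      = (pochInf X X)⁻¹ * ∑' n : ℕ, X ^ (n + 1) * (1 - X ^ (n + 1) : PowerSeries ℚ)⁻¹ := by
  exact sum_of_tails_partitions_aux
end

section
/- Let j_0(q)=1 and for n>0 let j_n(q) = Σ_{0≤m≤n−1} q^m [n−1 choose m]_q, the generating function for partitions where the largest part plus the number of parts is at most n. Then Σ_{n≥0} ( 1/(q;q)_∞ − j_n(q) ) = (2/(q;q)_∞) Σ_{n≥1} q^n/(1−q^n), as formal power series in q. -/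
open PowerSeries Finset

/-- The Gaussian binomial coefficient `[n choose m]_q = (q;q)_n / ((q;q)_m (q;q)_{n-m})`. -/
noncomputable def gauss (n m : ℕ) : PowerSeries ℚ :=
  poch X X n * (poch X X m * poch X X (n - m))⁻¹

/-- `j_n(q)`, the generating function for partitions where the largest part plus the
number of parts is at most `n`. -/
noncomputable def jP : ℕ → PowerSeries ℚ
  | 0 => 1
  | n + 1 => ∑ m ∈ range (n + 1), X ^ m * gauss n m

namespace SOT


noncomputable instance : T2Space (PowerSeries ℚ) :=
  inferInstanceAs (T2Space ((Unit →₀ ℕ) → ℚ))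

/-- coefficient shorthand -/
noncomputable abbrev C (d : ℕ) (f : PowerSeries ℚ) : ℚ := PowerSeries.coeff d f

lemma eval_eq_coeff (f : PowerSeries ℚ) (s : Unit →₀ ℕ) : f s = C (s ()) f := by
  have : s = Finsupp.single () (s ()) := by ext ⟨⟩; simp
  conv_lhs => rw [this]
  rfl

/-- congruence mod X^d -/
def Ec (d : ℕ) (f g : PowerSeries ℚ) : Prop := X ^ d ∣ (f - g)

lemma ec_iff {d : ℕ} {f g : PowerSeries ℚ} : Ec d f g ↔ ∀ e < d, C e f = C e g := by
  unfold Ec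
  rw [PowerSeries.X_pow_dvd_iff]
  constructor
  · intro h e he
    have := h e he
    rw [map_sub, sub_eq_zero] at this
    exact this
  · intro h e he
    rw [map_sub, sub_eq_zero]
    exact h e he

lemma Ec.refl {d : ℕ} (f : PowerSeries ℚ) : Ec d f f := by simp [Ec]

lemma Ec.mul {d : ℕ} {f g f' g' : PowerSeries ℚ} (h : Ec d f g) (h' : Ec d f' g') :
    Ec d (f * f') (g * g') := by
  have e : f * f' - g * g' = f * (f' - g') + (f - g) * g' := by ring
  unfold Ec at *
  rw [e]
  exact dvd_add (h'.mul_left f) (h.mul_right g')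

lemma Ec.inv {d : ℕ} {f g : PowerSeries ℚ} (hf : constantCoeff f ≠ 0)
    (hg : constantCoeff g ≠ 0) (h : Ec d f g) : Ec d f⁻¹ g⁻¹ := by
  have e : f⁻¹ - g⁻¹ = f⁻¹ * ((g - f) * g⁻¹) := by
    rw [← mul_assoc, mul_sub, sub_mul, mul_assoc f⁻¹ g, PowerSeries.mul_inv_cancel _ hg,
      PowerSeries.inv_mul_cancel _ hf, mul_one, one_mul]
  unfold Ec at *
  rw [e]
  have hgf : X ^ d ∣ g - f := by
    have := h.neg_right
    rwa [neg_sub] at this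
  exact ((hgf.mul_right g⁻¹).mul_left f⁻¹)



lemma C_sub (d : ℕ) (u v : PowerSeries ℚ) : C d (u - v) = C d u - C d v := map_sub _ u v
lemma C_mulXpow (d n : ℕ) (p : PowerSeries ℚ) :
    C d (p * X ^ n) = if n ≤ d then C (d - n) p else 0 := PowerSeries.coeff_mul_X_pow' p n d
lemma C_mk (f : ℕ → ℚ) (d : ℕ) : C d (PowerSeries.mk f) = f d := PowerSeries.coeff_mk d f

lemma hasSum_of_coeff {f : ℕ → PowerSeries ℚ} {g : PowerSeries ℚ} {B : ℕ → ℕ}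
    (h0 : ∀ d n, B d ≤ n → C d (f n) = 0)
    (hg : ∀ d, C d g = ∑ n ∈ range (B d), C d (f n)) : HasSum f g := by
  apply (Pi.hasSum (f := f) (g := g)).mpr
  intro s
  rw [eval_eq_coeff g s, hg (s ())]
  have : ∀ n, f n s = C (s ()) (f n) := fun n => eval_eq_coeff (f n) s
  simp only [this]
  exact hasSum_sum_of_ne_finset_zero (fun b hb => h0 _ b (by simpa using hb))

lemma coeff_mul_prod_high (d : ℕ) (T : Finset ℕ) (hT : ∀ k ∈ T, d ≤ k) (A : PowerSeries ℚ) :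
    C d (A * ∏ k ∈ T, (1 - X * X ^ k)) = C d A := by
  induction T using Finset.induction with
  | empty => simp
  | @insert a T ha ih =>
      rw [Finset.prod_insert ha]
      have : A * ((1 - X * X ^ a) * ∏ k ∈ T, (1 - X * X ^ k))
          = (A * ∏ k ∈ T, (1 - X * X ^ k)) * (1 - X * X ^ a) := by ring
      rw [this]
      have hx : (1 - X * X ^ a : PowerSeries ℚ) = 1 - X ^ (a + 1) := by
        rw [pow_succ']
      rw [hx, mul_sub, mul_one]
      rw [C_sub, C_mulXpow]
      have hna : ¬ (a + 1 ≤ d) := by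
        have := hT a (Finset.mem_insert_self a T)
        omega
      rw [if_neg hna, sub_zero]
      exact ih (fun k hk => hT k (Finset.mem_insert_of_mem hk))

lemma hasProd_poch :
    HasProd (fun k => (1 - X * X ^ k : PowerSeries ℚ))
      (PowerSeries.mk fun d => C d (poch X X d)) := by
  unfold HasProd
  apply tendsto_pi_nhds.mpr
  intro s
  set d := s () with hd
  apply Filter.Tendsto.congr' _ tendsto_const_nhds
  filter_upwards [Filter.eventually_ge_atTop (range d)] with S hS
  rw [eval_eq_coeff (PowerSeries.mk fun d => C d (poch X X d)) s,
    eval_eq_coeff (∏ b ∈ S, (1 - X * X ^ b)) s, ← hd]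
  rw [← Finset.prod_sdiff hS]
  have : (∏ k ∈ S \ range d, (1 - X * X ^ k : PowerSeries ℚ)) * ∏ k ∈ range d, (1 - X * X ^ k)
      = (∏ k ∈ range d, (1 - X * X ^ k)) * ∏ k ∈ S \ range d, (1 - X * X ^ k) := by ring
  rw [this, coeff_mul_prod_high d _ (fun k hk => by
    have := Finset.mem_sdiff.mp hk
    simpa using Nat.le_of_not_lt (by simpa using this.2))]
  rw [C_mk]
  rfl

lemma pochInf_eq : pochInf X X = PowerSeries.mk fun d => C d (poch X X d) :=
  hasProd_poch.tprod_eq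

lemma coeff_pochInf (d : ℕ) : C d (pochInf X X) = C d (poch X X d) := by
  rw [pochInf_eq, C_mk]



lemma poch_succ (n : ℕ) : poch X X (n + 1) = poch X X n * (1 - X ^ (n + 1)) := by
  rw [poch, Finset.prod_range_succ, ← pow_succ']
  rfl

lemma cc_poch (n : ℕ) : constantCoeff (poch X X n) = 1 := by
  induction n with
  | zero => simp [poch]
  | succ n ih => rw [poch_succ, map_mul, ih, map_sub, map_one, map_pow, constantCoeff_X]; simp

lemma ec_one_sub {m n : ℕ} (h : m ≤ n) : Ec m (1 - X ^ n : PowerSeries ℚ) 1 := by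
  unfold Ec
  have : (1 - X ^ n : PowerSeries ℚ) - 1 = -(X ^ n) := by ring
  rw [this]
  exact (pow_dvd_pow X h).neg_right

lemma Ec.mul' {d : ℕ} {f g f' g' : PowerSeries ℚ} (h : Ec d f g) (h' : Ec d f' g') :
    Ec d (f * f') (g * g') := by
  have e : f * f' - g * g' = f * (f' - g') + (f - g) * g' := by ring
  unfold Ec at *
  rw [e]
  exact dvd_add (h'.mul_left f) (h.mul_right g')

lemma ec_poch {m n : ℕ} (h : m ≤ n) : Ec (m + 1) (poch X X n) (poch X X m) := by
  induction n, h using Nat.le_induction with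
  | base => simp [Ec]
  | succ n hmn ih =>
      rw [poch_succ]
      have h1 : Ec (m + 1) (1 - X ^ (n + 1) : PowerSeries ℚ) 1 := ec_one_sub (by omega)
      have := ih.mul' h1
      rwa [mul_one] at this

noncomputable def gb : ℕ → ℕ → PowerSeries ℚ
  | _, 0 => 1
  | 0, _ + 1 => 0
  | n + 1, m + 1 => gb n m + X ^ (m + 1) * gb n (m + 1)

lemma gb_eq_zero : ∀ {n m : ℕ}, n < m → gb n m = 0
  | 0, _ + 1, _ => rfl
  | n + 1, m + 1, h => by
      rw [gb, gb_eq_zero (by omega), gb_eq_zero (by omega)]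
      simp

lemma poch_mul_gb : ∀ n m : ℕ, m ≤ n →
    poch X X m * poch X X (n - m) * gb n m = poch X X n := by
  intro n
  induction n with
  | zero => intro m hm; interval_cases m; simp [gb, poch]
  | succ n ih =>
      intro m hm
      match m with
      | 0 => simp [gb, poch]
      | m + 1 =>
        have hmn : m ≤ n := by omega
        rw [Nat.succ_sub_succ, show gb (n + 1) (m + 1) = gb n m + X ^ (m + 1) * gb n (m + 1)
          from rfl]
        rcases Nat.eq_or_lt_of_le hmn with heq | hlt
        · subst heq
          have hz : gb m (m + 1) = 0 := gb_eq_zero (by omega)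
          rw [hz, mul_zero, add_zero, Nat.sub_self]
          have key := ih m le_rfl
          rw [Nat.sub_self] at key
          calc poch X X (m + 1) * poch X X 0 * gb m m
              = poch X X m * poch X X 0 * gb m m * (1 - X ^ (m + 1)) := by
                rw [poch_succ]; ring
            _ = poch X X m * (1 - X ^ (m + 1)) := by rw [key]
            _ = poch X X (m + 1) := (poch_succ m).symm
        · have h1 : m + 1 ≤ n := hlt
          have e1 : poch X X (m + 1) = poch X X m * (1 - X ^ (m + 1)) := poch_succ m
          have e2 : poch X X (n - m) = poch X X (n - (m + 1)) * (1 - X ^ (n - m)) := by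
            rw [show n - m = (n - (m + 1)) + 1 by omega, poch_succ,
              show n - (m + 1) + 1 = n - m by omega]
          have ihm := ih m hmn
          have ihm1 := ih (m + 1) h1
          have epow : (X : PowerSeries ℚ) ^ (m + 1) * X ^ (n - m) = X ^ (n + 1) := by
            rw [← pow_add]
            congr 1
            omega
          calc poch X X (m + 1) * poch X X (n - m) * (gb n m + X ^ (m + 1) * gb n (m + 1))
              = poch X X m * poch X X (n - m) * gb n m * (1 - X ^ (m + 1))
                + poch X X (m + 1) * poch X X (n - (m + 1)) * gb n (m + 1)
                  * (X ^ (m + 1) * (1 - X ^ (n - m))) := by rw [e1, e2]; ring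
            _ = poch X X n * (1 - X ^ (m + 1)) + poch X X n * (X ^ (m + 1) * (1 - X ^ (n - m))) := by
                rw [ihm, ihm1]
            _ = poch X X n * (1 - X ^ (m + 1) * X ^ (n - m)) := by ring
            _ = poch X X (n + 1) := by rw [epow, ← poch_succ]

lemma gauss_eq_gb {n m : ℕ} (h : m ≤ n) : gauss n m = gb n m := by
  have hcc : constantCoeff (poch X X m * poch X X (n - m)) ≠ 0 := by
    rw [map_mul, cc_poch, cc_poch]; norm_num
  have key := poch_mul_gb n m h
  rw [gauss, ← key]
  rw [mul_comm (poch X X m * poch X X (n - m)) (gb n m), mul_assoc,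
    PowerSeries.mul_inv_cancel _ hcc, mul_one]

lemma gauss_symm {n m : ℕ} (h : m ≤ n) : gauss n m = gauss n (n - m) := by
  rw [gauss, gauss, Nat.sub_sub_self h, mul_comm (poch X X (n - m))]


open Nat

/-- number of partitions of `N` with largest part ≤ w and number of parts ≤ h -/
noncomputable def bcount (w h N : ℕ) : ℕ :=
  (Finset.univ.filter fun l : Partition N => l.parts.sup ≤ w ∧ l.parts.card ≤ h).card

/-- number of partitions of `N` with largest part + number of parts ≤ n -/
noncomputable def cnt (n N : ℕ) : ℕ :=
  (Finset.univ.filter fun l : Partition N => l.parts.sup + l.parts.card ≤ n).card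

lemma sup_mem_of_ne_zero {s : Multiset ℕ} (h : s.sup ≠ 0) : s.sup ∈ s := by
  induction s using Multiset.induction with
  | empty => simp at h
  | cons a t ih =>
      rw [Multiset.sup_cons] at h ⊢
      rcases le_total t.sup a with hle | hle
      · rw [sup_eq_left.mpr hle]
        exact Multiset.mem_cons_self a t
      · rw [sup_eq_right.mpr hle] at h ⊢
        exact Multiset.mem_cons_of_mem (ih h)

lemma part_le_N {N : ℕ} (l : Partition N) {p : ℕ} (hp : p ∈ l.parts) : p ≤ N := by
  rw [← l.parts_sum]
  exact Multiset.single_le_sum (fun x _ => Nat.zero_le x) p hp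

lemma sup_le_N {N : ℕ} (l : Partition N) : l.parts.sup ≤ N :=
  Multiset.sup_le.mpr fun p hp => part_le_N l hp

lemma card_le_N {N : ℕ} (l : Partition N) : l.parts.card ≤ N := by
  have := Multiset.card_nsmul_le_sum (fun x hx => l.parts_pos hx)
  rw [l.parts_sum] at this
  simpa using this

lemma sup_eq_zero_iff {s : Multiset ℕ} : s.sup = 0 ↔ ∀ x ∈ s, x = 0 := by
  constructor
  · intro h x hx
    have := Multiset.le_sup hx
    omega
  · intro h
    exact Nat.le_zero.mp (Multiset.sup_le.mpr fun x hx => Nat.le_zero.mpr (h x hx))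

lemma parts_eq_zero_of_sup_zero {N : ℕ} (l : Partition N) (h : l.parts.sup = 0) :
    l.parts = 0 := by
  rw [Multiset.eq_zero_iff_forall_notMem]
  intro x hx
  have h1 := l.parts_pos hx
  have h2 := sup_eq_zero_iff.mp h x hx
  omega

/-- the key erase/cons bijection -/
lemma card_erase_bij (v N : ℕ) (hv : 1 ≤ v) (hvN : v ≤ N) (P : Multiset ℕ → Prop)
    [DecidablePred P] :
    ((Finset.univ.filter fun l : Partition N => P l.parts ∧ v ∈ l.parts) : Finset (Partition N)).card
      = (Finset.univ.filter fun m : Partition (N - v) => P (v ::ₘ m.parts)).card := by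
  refine Finset.card_bij'
    (i := fun l hl => ⟨l.parts.erase v,
      fun {i} hi => l.parts_pos (Multiset.mem_of_mem_erase hi), by
        have hmem : v ∈ l.parts := ((Finset.mem_filter.mp hl).2).2
        have := Multiset.cons_erase hmem
        have hsum : (v ::ₘ l.parts.erase v).sum = N := by rw [this, l.parts_sum]
        rw [Multiset.sum_cons] at hsum
        omega⟩)
    (j := fun m hm => ⟨v ::ₘ m.parts,
      fun {i} hi => by
        rcases Multiset.mem_cons.mp hi with h | h
        · omega
        · exact m.parts_pos h, by
        rw [Multiset.sum_cons, m.parts_sum]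
        omega⟩) ?hi ?hj ?left ?right
  case hi =>
    intro l hl
    rw [Finset.mem_filter]
    refine ⟨Finset.mem_univ _, ?_⟩
    have hmem : v ∈ l.parts := ((Finset.mem_filter.mp hl).2).2
    simp only
    rw [Multiset.cons_erase hmem]
    exact ((Finset.mem_filter.mp hl).2).1
  case hj =>
    intro m hm
    rw [Finset.mem_filter]
    refine ⟨Finset.mem_univ _, ?_⟩
    constructor
    · exact (Finset.mem_filter.mp hm).2
    · exact Multiset.mem_cons_self v _
  case left =>
    intro l hl
    have hmem : v ∈ l.parts := ((Finset.mem_filter.mp hl).2).2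
    apply Nat.Partition.ext
    simp only
    exact Multiset.cons_erase hmem
  case right =>
    intro m hm
    apply Nat.Partition.ext
    simp only
    exact Multiset.erase_cons_head v m.parts


lemma parts_eq_zero_of_card_zero {N : ℕ} (l : Nat.Partition N) (h : l.parts.card = 0) :
    l.parts = 0 := Multiset.card_eq_zero.mp h

lemma N_eq_zero_of_parts_eq_zero {N : ℕ} (l : Nat.Partition N) (h : l.parts = 0) : N = 0 := by
  rw [← l.parts_sum, h]
  simp

lemma bcount_w0 (h N : ℕ) : bcount 0 h N = if N = 0 then 1 else 0 := by
  unfold bcount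
  split_ifs with hN
  · subst hN
    rw [Finset.filter_true_of_mem, Finset.card_univ]
    · exact Fintype.card_unique
    · intro l _
      have h0 : l.parts = 0 := by
        rw [Multiset.eq_zero_iff_forall_notMem]
        intro x hx
        have := part_le_N l hx
        have := l.parts_pos hx
        omega
      rw [h0]
      simp
  · rw [Finset.card_eq_zero, Finset.filter_eq_empty_iff]
    intro l _
    intro hcon
    exact hN (N_eq_zero_of_parts_eq_zero l (parts_eq_zero_of_sup_zero l (Nat.le_zero.mp hcon.1)))

lemma bcount_h0 (w N : ℕ) : bcount w 0 N = if N = 0 then 1 else 0 := by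
  unfold bcount
  split_ifs with hN
  · subst hN
    rw [Finset.filter_true_of_mem, Finset.card_univ]
    · exact Fintype.card_unique
    · intro l _
      have h0 : l.parts = 0 := by
        rw [Multiset.eq_zero_iff_forall_notMem]
        intro x hx
        have := part_le_N l hx
        have := l.parts_pos hx
        omega
      rw [h0]
      simp
  · rw [Finset.card_eq_zero, Finset.filter_eq_empty_iff]
    intro l _
    intro hcon
    exact hN (N_eq_zero_of_parts_eq_zero l (parts_eq_zero_of_card_zero l (Nat.le_zero.mp hcon.2)))

lemma bcount_split (m h N : ℕ) :
    bcount (m + 1) (h + 1) N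
      = bcount m (h + 1) N + if m + 1 ≤ N then bcount (m + 1) h (N - (m + 1)) else 0 := by
  classical
  have hB : (Finset.filter (fun l : Nat.Partition N => ¬ (m + 1) ∈ l.parts)
        (Finset.filter (fun l : Nat.Partition N => l.parts.sup ≤ m + 1 ∧ l.parts.card ≤ h + 1)
          Finset.univ)).card
      = bcount m (h + 1) N := by
    rw [bcount]
    rw [Finset.filter_filter]
    congr 1
    apply Finset.filter_congr
    intro l _
    constructor
    · rintro ⟨⟨h1, h2⟩, h3⟩
      refine ⟨?_, h2⟩
      apply Multiset.sup_le.mpr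
      intro x hx
      have hxs := Multiset.le_sup hx
      have hxm : x ≤ m + 1 := le_trans hxs h1
      rcases Nat.lt_or_ge x (m + 1) with hlt | hge
      · omega
      · exfalso; apply h3; have hxe : x = m + 1 := by omega
        rwa [← hxe]
    · rintro ⟨h1, h2⟩
      refine ⟨⟨le_trans h1 (by omega), h2⟩, ?_⟩
      intro hmem
      have := Multiset.le_sup hmem
      omega
  have hA : (Finset.filter (fun l : Nat.Partition N => (m + 1) ∈ l.parts)
        (Finset.filter (fun l : Nat.Partition N => l.parts.sup ≤ m + 1 ∧ l.parts.card ≤ h + 1)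
          Finset.univ)).card
      = if m + 1 ≤ N then bcount (m + 1) h (N - (m + 1)) else 0 := by
    rw [Finset.filter_filter]
    split_ifs with hmN
    · refine Eq.trans (card_erase_bij (m + 1) N (by omega) hmN
        (fun s => s.sup ≤ m + 1 ∧ s.card ≤ h + 1)) ?_
      rw [bcount]
      congr 1
      apply Finset.filter_congr
      intro l _
      rw [Multiset.sup_cons, Multiset.card_cons]
      constructor
      · rintro ⟨h1, h2⟩
        exact ⟨le_trans le_sup_right h1, by omega⟩
      · rintro ⟨h1, h2⟩
        exact ⟨sup_le_iff.mpr ⟨le_rfl, h1⟩, by omega⟩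
    · rw [Finset.card_eq_zero, Finset.filter_eq_empty_iff]
      intro l _
      rintro ⟨_, hmem⟩
      exact hmN (part_le_N l hmem)
  conv_lhs => rw [bcount]
  rw [← Finset.card_filter_add_card_filter_not
    (p := fun l : Nat.Partition N => (m + 1) ∈ l.parts), hA, hB]
  omega

lemma C_one (N : ℕ) : C N (1 : PowerSeries ℚ) = if N = 0 then 1 else 0 :=
  PowerSeries.coeff_one N

lemma C_zero (d : ℕ) : C d (0 : PowerSeries ℚ) = 0 := map_zero _

lemma C_add (d : ℕ) (u v : PowerSeries ℚ) : C d (u + v) = C d u + C d v := map_add _ u v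

lemma coeff_gb : ∀ n m N : ℕ, m ≤ n → C N (gb n m) = (bcount m (n - m) N : ℚ) := by
  intro n
  induction n with
  | zero =>
      intro m N hm
      interval_cases m
      rw [show gb 0 0 = 1 from rfl, bcount_w0, C_one]
      split_ifs <;> simp
  | succ n ih =>
      intro m N hm
      match m with
      | 0 =>
          rw [show gb (n + 1) 0 = 1 from rfl, bcount_w0, C_one]
          split_ifs <;> simp
      | m + 1 =>
        rw [show gb (n + 1) (m + 1) = gb n m + X ^ (m + 1) * gb n (m + 1) from rfl,
          C_add, Nat.succ_sub_succ]
        have hC2 : C N (X ^ (m + 1) * gb n (m + 1))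
            = if m + 1 ≤ N then C (N - (m + 1)) (gb n (m + 1)) else 0 := by
          rw [mul_comm, C_mulXpow]
        rcases Nat.eq_or_lt_of_le (show m ≤ n by omega) with heq | hlt
        · subst heq
          rw [gb_eq_zero (show m < m + 1 by omega), mul_zero, C_zero, add_zero,
            ih m N le_rfl, Nat.sub_self, bcount_h0, bcount_h0]
        · have hmain := ih m N (by omega)
          have hside := ih (m + 1) (N - (m + 1)) hlt
          rw [hC2, hmain]
          rw [show n - m = (n - (m + 1)) + 1 by omega, bcount_split m (n - (m + 1)) N]
          split_ifs with hmN
          · rw [hside]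
            push_cast
            ring
          · push_cast
            ring

lemma cnt_zero (N : ℕ) : cnt 0 N = if N = 0 then 1 else 0 := by
  unfold cnt
  split_ifs with hN
  · subst hN
    rw [Finset.filter_true_of_mem, Finset.card_univ]
    · exact Fintype.card_unique
    · intro l _
      have h0 : l.parts = 0 := by
        rw [Multiset.eq_zero_iff_forall_notMem]
        intro x hx
        have := part_le_N l hx
        have := l.parts_pos hx
        omega
      rw [h0]
      simp
  · rw [Finset.card_eq_zero, Finset.filter_eq_empty_iff]
    intro l _ hcon
    have hc : l.parts.card = 0 := by omega
    exact hN (N_eq_zero_of_parts_eq_zero l (parts_eq_zero_of_card_zero l hc))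

lemma fiber_zero (n N : ℕ) :
    ((Finset.univ.filter fun l : Nat.Partition N =>
        (l.parts.sup + l.parts.card ≤ n + 1) ∧ l.parts.sup = 0)).card
      = if N = 0 then 1 else 0 := by
  split_ifs with hN
  · subst hN
    rw [Finset.filter_true_of_mem, Finset.card_univ]
    · exact Fintype.card_unique
    · intro l _
      have h0 : l.parts = 0 := by
        rw [Multiset.eq_zero_iff_forall_notMem]
        intro x hx
        have := part_le_N l hx
        have := l.parts_pos hx
        omega
      rw [h0]
      constructor <;> simp
  · rw [Finset.card_eq_zero, Finset.filter_eq_empty_iff]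
    intro l _ hcon
    exact hN (N_eq_zero_of_parts_eq_zero l (parts_eq_zero_of_sup_zero l hcon.2))

lemma fiber_pos (n N m : ℕ) (hm : m ≤ n) (h1 : 1 ≤ m) :
    ((Finset.univ.filter fun l : Nat.Partition N =>
        (l.parts.sup + l.parts.card ≤ n + 1) ∧ l.parts.sup = m)).card
      = if m ≤ N then bcount m (n - m) (N - m) else 0 := by
  classical
  split_ifs with hmN
  · have hcongr : (Finset.univ.filter fun l : Nat.Partition N =>
          (l.parts.sup + l.parts.card ≤ n + 1) ∧ l.parts.sup = m)
        = (Finset.univ.filter fun l : Nat.Partition N =>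
          (l.parts.sup = m ∧ l.parts.card ≤ n - m + 1) ∧ m ∈ l.parts) := by
      apply Finset.filter_congr
      intro l _
      constructor
      · rintro ⟨hc, hs⟩
        have hmem : m ∈ l.parts := by
          rw [← hs]
          exact sup_mem_of_ne_zero (by omega)
        exact ⟨⟨hs, by omega⟩, hmem⟩
      · rintro ⟨⟨hs, hc⟩, _⟩
        exact ⟨by omega, hs⟩
    rw [hcongr]
    refine Eq.trans (card_erase_bij m N h1 hmN
      (fun s => s.sup = m ∧ s.card ≤ n - m + 1)) ?_
    rw [bcount]
    congr 1
    apply Finset.filter_congr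
    intro l _
    rw [Multiset.sup_cons, Multiset.card_cons]
    constructor
    · rintro ⟨hs, hc⟩
      exact ⟨sup_eq_left.mp hs, by omega⟩
    · rintro ⟨hs, hc⟩
      exact ⟨sup_eq_left.mpr hs, by omega⟩
  · rw [Finset.card_eq_zero, Finset.filter_eq_empty_iff]
    intro l _
    rintro ⟨_, hs⟩
    have hmem : m ∈ l.parts := by
      rw [← hs]
      exact sup_mem_of_ne_zero (by omega)
    exact hmN (part_le_N l hmem)

lemma cnt_succ (n N : ℕ) :
    cnt (n + 1) N = ∑ m ∈ range (n + 1), if m ≤ N then bcount m (n - m) (N - m) else 0 := by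
  classical
  rw [cnt]
  rw [Finset.card_eq_sum_card_fiberwise (f := fun l : Nat.Partition N => l.parts.sup)
    (t := range (n + 1)) ?hmem]
  case hmem =>
    intro l hl
    replace hl := Finset.mem_filter.mp (Finset.mem_coe.mp hl)
    rw [Finset.mem_coe, Finset.mem_range]
    show l.parts.sup < n + 1
    rcases Nat.eq_zero_or_pos l.parts.card with hc | hc
    · have h0 := parts_eq_zero_of_card_zero l hc
      rw [h0]
      simp
    · have := hl.2
      omega
  apply Finset.sum_congr rfl
  intro m hm
  rw [Finset.filter_filter]
  match m with
  | 0 =>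
      rw [fiber_zero n N, if_pos (Nat.zero_le N), Nat.sub_zero, Nat.sub_zero, bcount_w0]
  | m + 1 =>
      exact fiber_pos n N (m + 1) (by simpa using hm) (by omega)

lemma C_sum (d : ℕ) (s : Finset ℕ) (f : ℕ → PowerSeries ℚ) :
    C d (∑ m ∈ s, f m) = ∑ m ∈ s, C d (f m) := map_sum _ _ _

lemma coeff_jP (n N : ℕ) : C N (jP n) = (cnt n N : ℚ) := by
  match n with
  | 0 =>
      rw [show jP 0 = 1 from rfl, C_one, cnt_zero]
      split_ifs <;> simp
  | n + 1 =>
      rw [show jP (n + 1) = ∑ m ∈ range (n + 1), X ^ m * gauss n m from rfl, C_sum, cnt_succ]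
      push_cast [apply_ite (Nat.cast : ℕ → ℚ)]
      apply Finset.sum_congr rfl
      intro m hm
      rw [Finset.mem_range] at hm
      rw [gauss_eq_gb (by omega), mul_comm, C_mulXpow]
      split_ifs with h
      · rw [coeff_gb n m (N - m) (by omega)]
      · rfl

lemma C0_eq (f : PowerSeries ℚ) : C 0 f = constantCoeff f :=
  PowerSeries.coeff_zero_eq_constantCoeff_apply f

lemma ec_pochInf (m : ℕ) : Ec (m + 1) (pochInf X X) (poch X X m) := by
  rw [ec_iff]
  intro e he
  rw [coeff_pochInf]
  exact (ec_iff.mp (ec_poch (show e ≤ m by omega)) e (by omega)).symm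

lemma cc_pochInf : constantCoeff (pochInf X X) = 1 := by
  rw [← C0_eq, coeff_pochInf 0, show poch X X 0 = 1 by simp [poch], C_one]
  simp

/-- the number of partitions of `N` -/
noncomputable def pfun (N : ℕ) : ℕ := Fintype.card (Nat.Partition N)

lemma bcount_NN (N : ℕ) : bcount N N N = pfun N := by
  rw [bcount, Finset.filter_true_of_mem, Finset.card_univ, pfun]
  intro l _
  exact ⟨sup_le_N l, card_le_N l⟩

lemma cnt_le (n N : ℕ) : cnt n N ≤ pfun N := by
  rw [cnt, pfun, ← Finset.card_univ]
  exact Finset.card_filter_le _ _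

lemma cnt_all (n N : ℕ) (h : 2 * N ≤ n) : cnt n N = pfun N := by
  rw [cnt, Finset.filter_true_of_mem, Finset.card_univ, pfun]
  intro l _
  have h1 := sup_le_N l
  have h2 := card_le_N l
  omega

lemma coeff_P (N : ℕ) : C N ((pochInf X X)⁻¹) = (pfun N : ℚ) := by
  have hccN : constantCoeff (poch X X N) ≠ 0 := by rw [cc_poch]; norm_num
  have hccI : constantCoeff (pochInf X X) ≠ 0 := by rw [cc_pochInf]; norm_num
  have h1 : Ec (N + 1) ((pochInf X X)⁻¹) ((poch X X N)⁻¹) :=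
    (ec_pochInf N).inv hccI hccN
  have halg : poch X X N * (poch X X N * poch X X N)⁻¹ = (poch X X N)⁻¹ := by
    rw [PowerSeries.mul_inv_rev, ← mul_assoc, PowerSeries.mul_inv_cancel _ hccN, one_mul]
  have h3 : Ec (N + 1) (gauss (2 * N) N) ((poch X X N)⁻¹) := by
    rw [gauss, show 2 * N - N = N by omega, ← halg]
    exact (ec_poch (show N ≤ 2 * N by omega)).mul'
      (Ec.refl ((poch X X N * poch X X N)⁻¹))
  rw [ec_iff.mp h1 N (by omega), ← ec_iff.mp h3 N (by omega),
    gauss_eq_gb (show N ≤ 2 * N by omega), coeff_gb (2 * N) N N (by omega),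
    show 2 * N - N = N by omega, bcount_NN]

lemma bcount_symm (w h N : ℕ) : bcount w h N = bcount h w N := by
  have h1 := coeff_gb (w + h) w N (by omega)
  have h2 := coeff_gb (w + h) h N (by omega)
  rw [show w + h - w = h by omega] at h1
  rw [show w + h - h = w by omega] at h2
  have h3 : gb (w + h) w = gb (w + h) h := by
    rw [← gauss_eq_gb (show w ≤ w + h by omega), ← gauss_eq_gb (show h ≤ w + h by omega),
      gauss_symm (show w ≤ w + h by omega), show w + h - w = h by omega]
  rw [h3, h2] at h1
  exact_mod_cast h1.symm

lemma multiset_sum_le_sum {s r : Multiset ℕ} (h : s ≤ r) : s.sum ≤ r.sum := by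
  calc s.sum ≤ (r - s).sum + s.sum := Nat.le_add_left _ _
    _ = r.sum := by rw [← Multiset.sum_add, tsub_add_cancel_of_le h]

lemma count_bij (j t N : ℕ) (hj : 1 ≤ j) (ht : 1 ≤ t) :
    (Finset.univ.filter fun l : Nat.Partition N => t ≤ l.parts.count j).card
      = if j * t ≤ N then pfun (N - j * t) else 0 := by
  classical
  have hrepsum : (Multiset.replicate t j).sum = j * t := by
    rw [Multiset.sum_replicate, smul_eq_mul, mul_comm]
  split_ifs with hjt
  · rw [pfun, ← Finset.card_univ]
    refine Finset.card_bij'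
      (i := fun l hl => (⟨l.parts - Multiset.replicate t j,
        fun {x} hx => l.parts_pos (Multiset.mem_of_le tsub_le_self hx), by
          have hle : Multiset.replicate t j ≤ l.parts := by
            rw [← Multiset.le_count_iff_replicate_le]
            exact (Finset.mem_filter.mp hl).2
          have := tsub_add_cancel_of_le hle
          have hsum : (l.parts - Multiset.replicate t j).sum
              + (Multiset.replicate t j).sum = N := by
            rw [← Multiset.sum_add, this, l.parts_sum]
          rw [hrepsum] at hsum
          omega⟩ : Nat.Partition (N - j * t)))
      (j := fun m hm => (⟨m.parts + Multiset.replicate t j,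
        fun {x} hx => by
          rcases Multiset.mem_add.mp hx with h | h
          · exact m.parts_pos h
          · have := Multiset.eq_of_mem_replicate h
            omega, by
          rw [Multiset.sum_add, m.parts_sum, hrepsum]
          omega⟩ : Nat.Partition N))
      ?_ ?_ ?_ ?_
    · intro l hl
      exact Finset.mem_univ _
    · intro m hm
      rw [Finset.mem_filter]
      refine ⟨Finset.mem_univ _, ?_⟩
      show t ≤ Multiset.count j (m.parts + Multiset.replicate t j)
      rw [Multiset.count_add, Multiset.count_replicate_self]
      omega
    · intro l hl
      apply Nat.Partition.ext
      show l.parts - Multiset.replicate t j + Multiset.replicate t j = l.parts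
      apply tsub_add_cancel_of_le
      rw [← Multiset.le_count_iff_replicate_le]
      exact (Finset.mem_filter.mp hl).2
    · intro m hm
      apply Nat.Partition.ext
      show m.parts + Multiset.replicate t j - Multiset.replicate t j = m.parts
      simp
  · rw [Finset.card_eq_zero, Finset.filter_eq_empty_iff]
    intro l _ hcon
    have hle : Multiset.replicate t j ≤ l.parts := by
      rw [← Multiset.le_count_iff_replicate_le]
      exact hcon
    have := multiset_sum_le_sum hle
    rw [hrepsum, l.parts_sum] at this
    omega

lemma sum_indicator_range {M c : ℕ} (h : c ≤ M) :
    ∑ n ∈ range M, (if n < c then 1 else 0) = c := by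
  classical
  rw [← Finset.card_filter]
  have he : Finset.filter (fun n => n < c) (range M) = range c := by
    ext x
    simp only [Finset.mem_filter, Finset.mem_range]
    omega
  rw [he, Finset.card_range]

lemma sum_indicator_Icc {M c : ℕ} (h : c ≤ M) :
    ∑ t ∈ Finset.Icc 1 M, (if t ≤ c then 1 else 0) = c := by
  classical
  rw [← Finset.card_filter]
  have he : Finset.filter (fun t => t ≤ c) (Finset.Icc 1 M) = Finset.Icc 1 c := by
    ext x
    simp only [Finset.mem_filter, Finset.mem_Icc]
    omega
  rw [he, Nat.card_Icc]
  omega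

lemma card_compl_filter {N : ℕ} (p : Nat.Partition N → Prop) [DecidablePred p] :
    (Finset.univ.filter fun l => ¬ p l).card = pfun N - (Finset.univ.filter p).card := by
  have := Finset.card_filter_add_card_filter_not (s := (Finset.univ : Finset (Nat.Partition N))) (p := p)
  rw [Finset.card_univ] at this
  rw [pfun]
  omega

/-- generic double counting: sum of a statistic bounded by N -/
lemma sum_stat {N : ℕ} (f : Nat.Partition N → ℕ) (hf : ∀ l, f l ≤ N) :
    ∑ l : Nat.Partition N, f l
      = ∑ m ∈ range N, (pfun N - (Finset.univ.filter fun l => f l ≤ m).card) := by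
  classical
  have step : ∀ l : Nat.Partition N, f l = ∑ m ∈ range N, (if m < f l then 1 else 0) :=
    fun l => (sum_indicator_range (hf l)).symm
  calc ∑ l : Nat.Partition N, f l
      = ∑ l : Nat.Partition N, ∑ m ∈ range N, (if m < f l then 1 else 0) :=
        Finset.sum_congr rfl (fun l _ => step l)
    _ = ∑ m ∈ range N, ∑ l : Nat.Partition N, (if m < f l then 1 else 0) := Finset.sum_comm
    _ = ∑ m ∈ range N, (pfun N - (Finset.univ.filter fun l => f l ≤ m).card) := by
        apply Finset.sum_congr rfl
        intro m _
        rw [← Finset.card_filter]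
        have he : (Finset.univ.filter fun l : Nat.Partition N => m < f l)
            = (Finset.univ.filter fun l : Nat.Partition N => ¬ (f l ≤ m)) := by
          apply Finset.filter_congr
          intro l _
          omega
        rw [he, card_compl_filter]

lemma filter_sup_eq_bcount {N m : ℕ} :
    (Finset.univ.filter fun l : Nat.Partition N => l.parts.sup ≤ m).card = bcount m N N := by
  rw [bcount]
  congr 1
  apply Finset.filter_congr
  intro l _
  constructor
  · intro h1
    exact ⟨h1, card_le_N l⟩
  · intro h1
    exact h1.1

lemma filter_card_eq_bcount {N m : ℕ} :
    (Finset.univ.filter fun l : Nat.Partition N => l.parts.card ≤ m).card = bcount N m N := by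
  rw [bcount]
  congr 1
  apply Finset.filter_congr
  intro l _
  constructor
  · intro h1
    exact ⟨sup_le_N l, h1⟩
  · intro h1
    exact h1.2

lemma sum_sup_eq_sum_card (N : ℕ) :
    ∑ l : Nat.Partition N, l.parts.sup = ∑ l : Nat.Partition N, l.parts.card := by
  rw [sum_stat (fun l => l.parts.sup) (fun l => sup_le_N l),
    sum_stat (fun l => l.parts.card) (fun l => card_le_N l)]
  apply Finset.sum_congr rfl
  intro m _
  rw [filter_sup_eq_bcount, filter_card_eq_bcount, bcount_symm]

lemma sum_tails_eq (N : ℕ) :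
    ∑ n ∈ range (2 * N + 1), (pfun N - cnt n N)
      = ∑ l : Nat.Partition N, (l.parts.sup + l.parts.card) := by
  classical
  have step : ∀ n, pfun N - cnt n N
      = (Finset.univ.filter fun l : Nat.Partition N =>
          n < l.parts.sup + l.parts.card).card := by
    intro n
    have he : (Finset.univ.filter fun l : Nat.Partition N => n < l.parts.sup + l.parts.card)
        = (Finset.univ.filter fun l : Nat.Partition N =>
            ¬ (l.parts.sup + l.parts.card ≤ n)) := by
      apply Finset.filter_congr
      intro l _
      omega
    rw [he, card_compl_filter]
    rfl
  calc ∑ n ∈ range (2 * N + 1), (pfun N - cnt n N)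
      = ∑ n ∈ range (2 * N + 1), ∑ l : Nat.Partition N,
          (if n < l.parts.sup + l.parts.card then 1 else 0) := by
        apply Finset.sum_congr rfl
        intro n _
        rw [step n, Finset.card_filter]
    _ = ∑ l : Nat.Partition N, ∑ n ∈ range (2 * N + 1),
          (if n < l.parts.sup + l.parts.card then 1 else 0) := Finset.sum_comm
    _ = ∑ l : Nat.Partition N, (l.parts.sup + l.parts.card) := by
        apply Finset.sum_congr rfl
        intro l _
        apply sum_indicator_range
        have h1 := sup_le_N l
        have h2 := card_le_N l
        omega

lemma count_le_N {N : ℕ} (l : Nat.Partition N) (j : ℕ) : l.parts.count j ≤ N :=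
  le_trans (Multiset.count_le_card j l.parts) (card_le_N l)

lemma sum_card_eq (N : ℕ) :
    ∑ l : Nat.Partition N, l.parts.card
      = ∑ j ∈ Finset.Icc 1 N, ∑ t ∈ Finset.Icc 1 N,
          (if j * t ≤ N then pfun (N - j * t) else 0) := by
  classical
  have hcard : ∀ l : Nat.Partition N,
      (l.parts.card : ℕ) = ∑ j ∈ Finset.Icc 1 N, l.parts.count j := by
    intro l
    rw [← Multiset.toFinset_sum_count_eq l.parts]
    apply Finset.sum_subset
    · intro j hj
      rw [Multiset.mem_toFinset] at hj
      rw [Finset.mem_Icc]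
      exact ⟨l.parts_pos hj, part_le_N l hj⟩
    · intro j _ hj
      rw [Multiset.mem_toFinset] at hj
      exact Multiset.count_eq_zero_of_notMem hj
  calc ∑ l : Nat.Partition N, l.parts.card
      = ∑ l : Nat.Partition N, ∑ j ∈ Finset.Icc 1 N, l.parts.count j :=
        Finset.sum_congr rfl (fun l _ => hcard l)
    _ = ∑ j ∈ Finset.Icc 1 N, ∑ l : Nat.Partition N, l.parts.count j := Finset.sum_comm
    _ = ∑ j ∈ Finset.Icc 1 N, ∑ t ∈ Finset.Icc 1 N,
          (if j * t ≤ N then pfun (N - j * t) else 0) := by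
        apply Finset.sum_congr rfl
        intro j hj
        rw [Finset.mem_Icc] at hj
        calc ∑ l : Nat.Partition N, l.parts.count j
            = ∑ l : Nat.Partition N, ∑ t ∈ Finset.Icc 1 N,
                (if t ≤ l.parts.count j then 1 else 0) :=
              Finset.sum_congr rfl (fun l _ => (sum_indicator_Icc (count_le_N l j)).symm)
          _ = ∑ t ∈ Finset.Icc 1 N, ∑ l : Nat.Partition N,
                (if t ≤ l.parts.count j then 1 else 0) := Finset.sum_comm
          _ = ∑ t ∈ Finset.Icc 1 N, (if j * t ≤ N then pfun (N - j * t) else 0) := by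
              apply Finset.sum_congr rfl
              intro t ht
              rw [Finset.mem_Icc] at ht
              rw [← Finset.card_filter]
              exact count_bij j t N (by omega) (by omega)

theorem main_nat (N : ℕ) :
    ∑ n ∈ range (2 * N + 1), (pfun N - cnt n N)
      = 2 * ∑ j ∈ Finset.Icc 1 N, ∑ t ∈ Finset.Icc 1 N,
          (if j * t ≤ N then pfun (N - j * t) else 0) := by
  rw [sum_tails_eq, Finset.sum_add_distrib, sum_sup_eq_sum_card, ← sum_card_eq, two_mul]

/-- divisor-count -/
noncomputable def dcount (b : ℕ) : ℕ := ((Finset.Icc 1 b).filter (· ∣ b)).card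

lemma dcount_eq_sum (b : ℕ) :
    dcount b = ∑ k ∈ range b, (if (k + 1) ∣ b ∧ k + 1 ≤ b then 1 else 0) := by
  classical
  rw [dcount, Finset.card_filter]
  refine Finset.sum_nbij' (i := fun j => j - 1) (j := fun k => k + 1) ?_ ?_ ?_ ?_ ?_
  · intro j hj
    rw [Finset.mem_Icc] at hj
    rw [Finset.mem_range]
    omega
  · intro k hk
    rw [Finset.mem_range] at hk
    rw [Finset.mem_Icc]
    omega
  · intro j hj
    rw [Finset.mem_Icc] at hj
    omega
  · intro k _
    omega
  · intro j hj
    rw [Finset.mem_Icc] at hj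
    have hj1 : j - 1 + 1 = j := by omega
    rw [hj1]
    split_ifs with h1 h2 h2
    · rfl
    · exact absurd ⟨h1, hj.2⟩ h2
    · exact absurd h2.1 h1
    · rfl

lemma divisor_reindex (N : ℕ) :
    ∑ k ∈ range (N + 1), pfun k * dcount (N - k)
      = ∑ j ∈ Finset.Icc 1 N, ∑ t ∈ Finset.Icc 1 N,
          (if j * t ≤ N then pfun (N - j * t) else 0) := by
  classical
  have h0 : ∑ k ∈ range (N + 1), pfun k * dcount (N - k)
      = ∑ b ∈ range (N + 1), pfun (N - b) * dcount b := by
    refine Finset.sum_nbij' (i := fun k => N - k) (j := fun k => N - k) ?_ ?_ ?_ ?_ ?_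
    · intro a ha
      rw [Finset.mem_range] at ha ⊢
      omega
    · intro a ha
      rw [Finset.mem_range] at ha ⊢
      omega
    · intro a ha
      rw [Finset.mem_range] at ha
      omega
    · intro a ha
      rw [Finset.mem_range] at ha
      omega
    · intro a ha
      rw [Finset.mem_range] at ha
      have : N - (N - a) = a := by omega
      rw [this]
  rw [h0]
  have h1 : ∀ b ∈ range (N + 1), pfun (N - b) * dcount b
      = ∑ j ∈ Finset.Icc 1 N, (if j ∣ b ∧ 1 ≤ b then pfun (N - b) else 0) := by
    intro b hb
    rw [Finset.mem_range] at hb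
    rw [dcount, Finset.card_filter, Finset.mul_sum]
    have h2 : ∀ j ∈ Finset.Icc 1 b,
        pfun (N - b) * (if j ∣ b then 1 else 0)
          = (if j ∣ b ∧ 1 ≤ b then pfun (N - b) else 0) := by
      intro j hj
      rw [Finset.mem_Icc] at hj
      split_ifs with hd1 hd2 hd2
      · ring
      · exact absurd ⟨hd1, by omega⟩ hd2
      · exact absurd hd2.1 hd1
      · ring
    rw [Finset.sum_congr rfl h2]
    apply Finset.sum_subset
    · intro j hj
      rw [Finset.mem_Icc] at hj ⊢
      omega
    · intro j hj hj2
      rw [Finset.mem_Icc] at hj hj2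
      rw [if_neg]
      rintro ⟨hd, hb1⟩
      have := Nat.le_of_dvd (by omega) hd
      omega
  rw [Finset.sum_congr rfl h1, Finset.sum_comm]
  apply Finset.sum_congr rfl
  intro j hj
  rw [Finset.mem_Icc] at hj
  rw [← Finset.sum_filter, ← Finset.sum_filter]
  refine Finset.sum_nbij' (i := fun b => b / j) (j := fun t => j * t) ?_ ?_ ?_ ?_ ?_
  · intro b hb
    rw [Finset.mem_filter, Finset.mem_range] at hb
    obtain ⟨hbN, hd, hb1⟩ := hb
    rw [Finset.mem_filter, Finset.mem_Icc]
    have hjb : j ≤ b := Nat.le_of_dvd (by omega) hd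
    have hmul : j * (b / j) = b := Nat.mul_div_cancel' hd
    refine ⟨⟨?_, ?_⟩, ?_⟩
    · have := Nat.div_le_self b j
      rcases Nat.eq_zero_or_pos (b / j) with h | h
      · rw [h, mul_zero] at hmul; omega
      · omega
    · have := Nat.div_le_self b j
      omega
    · rw [hmul]; omega
  · intro t ht
    rw [Finset.mem_filter, Finset.mem_Icc] at ht
    obtain ⟨⟨ht1, _⟩, hjt⟩ := ht
    rw [Finset.mem_filter, Finset.mem_range]
    refine ⟨by omega, Dvd.intro t rfl, ?_⟩
    have : 1 * 1 ≤ j * t := Nat.mul_le_mul (by omega) (by omega)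
    omega
  · intro b hb
    rw [Finset.mem_filter, Finset.mem_range] at hb
    exact Nat.mul_div_cancel' hb.2.1
  · intro t ht
    exact Nat.mul_div_cancel_left t (by omega)
  · intro b hb
    rw [Finset.mem_filter, Finset.mem_range] at hb
    rw [Nat.mul_div_cancel' hb.2.1]

lemma coeff_geom (j d : ℕ) (hj : 1 ≤ j) :
    C d (X ^ j * (1 - X ^ j : PowerSeries ℚ)⁻¹)
      = if j ∣ d ∧ j ≤ d then 1 else 0 := by
  classical
  have hcc : constantCoeff (1 - X ^ j : PowerSeries ℚ) ≠ 0 := by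
    rw [map_sub, map_one, map_pow, constantCoeff_X, zero_pow (by omega), sub_zero]
    norm_num
  set G : PowerSeries ℚ := ∑ t ∈ range (d + 1), (X ^ j) ^ t with hG
  have hgeom : (1 - X ^ j : PowerSeries ℚ) * G = 1 - (X ^ j) ^ (d + 1) := by
    have := geom_sum_mul (X ^ j : PowerSeries ℚ) (d + 1)
    rw [hG]
    linear_combination -this
  have hec : Ec (d + 1) ((1 - X ^ j : PowerSeries ℚ)⁻¹) G := by
    unfold Ec
    have he : (1 - X ^ j : PowerSeries ℚ)⁻¹ - G
        = (1 - X ^ j : PowerSeries ℚ)⁻¹ * ((X ^ j) ^ (d + 1)) := by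
      rw [show ((X : PowerSeries ℚ) ^ j) ^ (d + 1) = 1 - (1 - (X ^ j) ^ (d + 1)) by ring,
        ← hgeom, mul_sub, mul_one, ← mul_assoc,
        PowerSeries.inv_mul_cancel _ hcc, one_mul]
    rw [he]
    apply Dvd.dvd.mul_left
    rw [← pow_mul]
    exact pow_dvd_pow X (by nlinarith)
  have hmain : C d (X ^ j * (1 - X ^ j : PowerSeries ℚ)⁻¹) = C d (X ^ j * G) :=
    ec_iff.mp ((Ec.refl (X ^ j : PowerSeries ℚ)).mul' hec) d (by omega)
  rw [hmain, hG, Finset.mul_sum]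
  have hterm : ∀ t ∈ range (d + 1),
      C d (X ^ j * (X ^ j) ^ t) = if d = j * (t + 1) then 1 else 0 := by
    intro t _
    rw [← pow_succ' (X ^ j : PowerSeries ℚ) t, ← pow_mul]
    exact PowerSeries.coeff_X_pow d (j * (t + 1))
  rw [C_sum, Finset.sum_congr rfl hterm]
  split_ifs with h
  · obtain ⟨hdvd, hle⟩ := h
    obtain ⟨c, hc⟩ := hdvd
    have hc1 : 1 ≤ c := by
      rcases Nat.eq_zero_or_pos c with h0 | h0
      · rw [h0, mul_zero] at hc; omega
      · exact h0
    rw [Finset.sum_eq_single_of_mem (c - 1) ?mem ?other]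
    · have hc2 : c - 1 + 1 = c := by omega
      rw [hc2, if_pos hc]
    case mem =>
      rw [Finset.mem_range]
      have : c ≤ j * c := Nat.le_mul_of_pos_left c (by omega)
      omega
    case other =>
      intro t _ htc
      rw [if_neg]
      intro hcon
      rw [hc] at hcon
      have : c = t + 1 := by
        have := Nat.eq_of_mul_eq_mul_left (show 0 < j by omega) hcon
        omega
      omega
  · apply Finset.sum_eq_zero
    intro t _
    rw [if_neg]
    intro hcon
    apply h
    constructor
    · exact Dvd.intro _ hcon.symm
    · rw [hcon]
      exact Nat.le_mul_of_pos_right j (by omega)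

/-- target of the left tsum -/
noncomputable def SL : PowerSeries ℚ :=
  PowerSeries.mk fun d => ∑ n ∈ range (2 * d + 1), ((pfun d : ℚ) - (cnt n d : ℚ))

/-- target of the right (inner) tsum -/
noncomputable def SR : PowerSeries ℚ :=
  PowerSeries.mk fun d => (dcount d : ℚ)

lemma hasSum_LHS : HasSum (fun n => (pochInf X X)⁻¹ - jP n) SL := by
  apply hasSum_of_coeff (B := fun d => 2 * d + 1)
  · intro d n hn
    rw [C_sub, coeff_P, coeff_jP, cnt_all n d (by omega)]
    ring
  · intro d
    rw [SL, C_mk]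
    apply Finset.sum_congr rfl
    intro n _
    rw [C_sub, coeff_P, coeff_jP]

lemma hasSum_RHS :
    HasSum (fun n => X ^ (n + 1) * (1 - X ^ (n + 1) : PowerSeries ℚ)⁻¹) SR := by
  apply hasSum_of_coeff (B := fun d => d)
  · intro d n hn
    have hdvd : (X : PowerSeries ℚ) ^ (n + 1) ∣ X ^ (n + 1) * (1 - X ^ (n + 1))⁻¹ :=
      dvd_mul_right _ _
    exact PowerSeries.X_pow_dvd_iff.mp hdvd d (by omega)
  · intro d
    rw [SR, C_mk, dcount_eq_sum, Nat.cast_sum]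
    apply Finset.sum_congr rfl
    intro k hk
    rw [coeff_geom (k + 1) d (by omega)]
    split_ifs <;> simp

lemma C_two_mul (d : ℕ) (u : PowerSeries ℚ) : C d (2 * u) = 2 * C d u := by
  rw [show (2 : PowerSeries ℚ) = PowerSeries.C 2 from (map_ofNat _ 2).symm]
  exact PowerSeries.coeff_C_mul d u 2

lemma C_mul_eq (d : ℕ) (u v : PowerSeries ℚ) :
    C d (u * v) = ∑ k ∈ range (d + 1), C k u * C (d - k) v := by
  show (PowerSeries.coeff d) (u * v) = _
  rw [PowerSeries.coeff_mul]
  exact Finset.Nat.sum_antidiagonal_eq_sum_range_succ (fun i j => C i u * C j v) d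

lemma SL_eq : SL = 2 * (pochInf X X)⁻¹ * SR := by
  apply PowerSeries.ext
  intro N
  have hL : C N SL = ((∑ n ∈ range (2 * N + 1), (pfun N - cnt n N) : ℕ) : ℚ) := by
    rw [SL, C_mk, Nat.cast_sum]
    apply Finset.sum_congr rfl
    intro n _
    rw [Nat.cast_sub (cnt_le n N)]
  have hR : C N (2 * (pochInf X X)⁻¹ * SR)
      = ((2 * ∑ k ∈ range (N + 1), pfun k * dcount (N - k) : ℕ) : ℚ) := by
    rw [mul_assoc, C_two_mul, C_mul_eq]
    push_cast
    congr 1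
    apply Finset.sum_congr rfl
    intro k _
    rw [coeff_P, SR, C_mk]
  show C N SL = C N (2 * (pochInf X X)⁻¹ * SR)
  rw [hL, hR, main_nat, divisor_reindex]

end SOT

/-- sums of tails over `j_n(q)`. -/
theorem sum_of_tails_j :
    ∑' n : ℕ, ((pochInf X X)⁻¹ - jP n)
      = 2 * (pochInf X X)⁻¹
          * ∑' n : ℕ, X ^ (n + 1) * (1 - X ^ (n + 1) : PowerSeries ℚ)⁻¹ := by
  rw [SOT.hasSum_LHS.tsum_eq, SOT.hasSum_RHS.tsum_eq]
  exact SOT.SL_eq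
end
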